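/- arXiv:2101.10406 — 3 statements merged into one kernel-verified Lean document; each statement's English description precedes it below -/
import Mathlib

section
/- Let f : ℝ → ℝ be continuous, and let I₀, I₁, …, I_{n-1} be compact intervals such that I_j f-covers I_{j+1} for j = 0, …, n-2 and I_{n-1} f-covers I₀. Then there exists x ∈ I₀ with f^n(x) = x and f^j(x) ∈ I_j for j = 0, …, n-1. -/
/-- `I` `g`-covers `J`: there is a compact subinterval `K = [a,b] ⊆ I` with `g(K) = J`. -/
def Covers (g : ℝ → ℝ) (I J : Set ℝ) : Prop :=
  ∃ a b : ℝ, a ≤ b ∧ Set.Icc a b ⊆ I ∧ g '' Set.Icc a b = J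

open Set in
lemma pullback_core (g : ℝ → ℝ) (hg : Continuous g) {α β p q u v : ℝ}
    (hpq : p < q) (hu : u ∈ Icc α β) (hv : v ∈ Icc α β) (huv : u ≤ v)
    (hgu : g u = p) (hgv : g v = q) :
    ∃ a' b', a' ≤ b' ∧ Icc a' b' ⊆ Icc α β ∧ g '' Icc a' b' = Icc p q := by
  set S : Set ℝ := {x ∈ Icc u v | g x = q} with hS
  have hSne : S.Nonempty := ⟨v, ⟨huv, le_refl v⟩, hgv⟩
  have hSclosed : IsClosed S := (isClosed_Icc.inter (isClosed_eq hg continuous_const) : _)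
  have hSbdd : BddBelow S := ⟨u, fun x hx => hx.1.1⟩
  set b' := sInf S with hb'
  have hb'S : b' ∈ S := hSclosed.csInf_mem hSne hSbdd
  have hb'min : ∀ z ∈ S, b' ≤ z := fun z hz => csInf_le hSbdd hz
  set T : Set ℝ := {x ∈ Icc u b' | g x = p} with hT
  have hTne : T.Nonempty := ⟨u, ⟨le_refl u, hb'S.1.1⟩, hgu⟩
  have hTclosed : IsClosed T := (isClosed_Icc.inter (isClosed_eq hg continuous_const) : _)
  have hTbdd : BddAbove T := ⟨b', fun x hx => hx.1.2⟩
  set a' := sSup T with ha'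
  have ha'T : a' ∈ T := hTclosed.csSup_mem hTne hTbdd
  have ha'max : ∀ z ∈ T, z ≤ a' := fun z hz => le_csSup hTbdd hz
  have hab' : a' ≤ b' := ha'T.1.2
  have hsub : Icc a' b' ⊆ Icc α β := by
    intro x hx
    exact ⟨le_trans hu.1 (le_trans ha'T.1.1 hx.1), le_trans hx.2 (le_trans hb'S.1.2 hv.2)⟩
  refine ⟨a', b', hab', hsub, ?_⟩
  apply subset_antisymm
  · rintro _ ⟨x, hx, rfl⟩
    constructor
    · by_contra h
      push_neg at h
      have hxa : a' < x := by
        rcases lt_or_eq_of_le hx.1 with h1 | h1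
        · exact h1
        · exfalso; rw [← h1, ha'T.2] at h; exact lt_irrefl p h
      have : ContinuousOn g (Icc x b') := hg.continuousOn
      have hiv : Icc (g x) (g b') ⊆ g '' Icc x b' :=
        intermediate_value_Icc hx.2 this
      have hp : p ∈ Icc (g x) (g b') := ⟨le_of_lt h, by rw [hb'S.2]; exact le_of_lt hpq⟩
      obtain ⟨y, hy, hgy⟩ := hiv hp
      have : y ∈ T := ⟨⟨le_trans ha'T.1.1 (le_trans hx.1 hy.1), hy.2⟩, hgy⟩
      have := ha'max y this
      linarith [hy.1]
    · by_contra h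
      push_neg at h
      have hxb : x < b' := by
        rcases lt_or_eq_of_le hx.2 with h1 | h1
        · exact h1
        · exfalso; rw [h1, hb'S.2] at h; exact lt_irrefl q h
      have : ContinuousOn g (Icc a' x) := hg.continuousOn
      have hiv : Icc (g a') (g x) ⊆ g '' Icc a' x := by
        have := intermediate_value_Icc hx.1 this
        exact this
      have hq : q ∈ Icc (g a') (g x) := ⟨by rw [ha'T.2]; exact le_of_lt hpq, le_of_lt h⟩
      obtain ⟨y, hy, hgy⟩ := hiv hq
      have : y ∈ S := ⟨⟨le_trans ha'T.1.1 hy.1, le_trans hy.2 (le_trans (le_of_lt hxb) hb'S.1.2)⟩, hgy⟩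
      have := hb'min y this
      linarith [hy.2]
  · have : Icc (g a') (g b') ⊆ g '' Icc a' b' :=
      intermediate_value_Icc hab' hg.continuousOn
    rw [ha'T.2, hb'S.2] at this
    exact this

open Set in
lemma pullback (g : ℝ → ℝ) (hg : Continuous g) {α β p q : ℝ}
    (hαβ : α ≤ β) (hpq : p ≤ q) (himg : Icc p q ⊆ g '' Icc α β) :
    ∃ a' b', a' ≤ b' ∧ Icc a' b' ⊆ Icc α β ∧ g '' Icc a' b' = Icc p q := by
  rcases eq_or_lt_of_le hpq with rfl | hpq'
  · obtain ⟨u, hu, hgu⟩ := himg (left_mem_Icc.mpr le_rfl)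
    exact ⟨u, u, le_rfl, by simpa using hu, by rw [Icc_self, Icc_self, image_singleton, hgu]⟩
  · obtain ⟨u, hu, hgu⟩ := himg ⟨le_rfl, hpq⟩
    obtain ⟨v, hv, hgv⟩ := himg ⟨hpq, le_rfl⟩
    rcases le_total u v with huv | hvu
    · exact pullback_core g hg hpq' hu hv huv hgu hgv
    · -- use the reflection trick
      have hneg : Continuous (g ∘ Neg.neg) := hg.comp continuous_neg
      have hu' : -u ∈ Icc (-β) (-α) := ⟨neg_le_neg hu.2, neg_le_neg hu.1⟩
      have hv' : -v ∈ Icc (-β) (-α) := ⟨neg_le_neg hv.2, neg_le_neg hv.1⟩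
      obtain ⟨a', b', hab', hsub, himg'⟩ :=
        pullback_core (g ∘ Neg.neg) hneg hpq' hu' hv' (neg_le_neg hvu)
          (by simpa using hgu) (by simpa using hgv)
      refine ⟨-b', -a', neg_le_neg hab', ?_, ?_⟩
      · intro x hx
        have hx' : -x ∈ Icc a' b' := ⟨by linarith [hx.2], by linarith [hx.1]⟩
        have : -x ∈ Icc (-β) (-α) := hsub hx'
        exact ⟨by linarith [this.2], by linarith [this.1]⟩
      · rw [← himg']
        ext y
        constructor
        · rintro ⟨x, hx, rfl⟩
          exact ⟨-x, ⟨by linarith [hx.2], by linarith [hx.1]⟩, by simp⟩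
        · rintro ⟨x, hx, rfl⟩
          exact ⟨-x, ⟨by linarith [hx.2], by linarith [hx.1]⟩, by simp⟩

open Set in
lemma chain_lemma (f : ℝ → ℝ) (hf : Continuous f) (A B : ℕ → ℝ) (hAB : ∀ k, A k ≤ B k)
    (m : ℕ) (hcov : ∀ k < m, Covers f (Icc (A k) (B k)) (Icc (A (k+1)) (B (k+1)))) :
    ∃ p q, p ≤ q ∧ Icc p q ⊆ Icc (A 0) (B 0) ∧ f^[m] '' Icc p q = Icc (A m) (B m) ∧
      ∀ k ≤ m, f^[k] '' Icc p q ⊆ Icc (A k) (B k) := by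
  induction m with
  | zero =>
    refine ⟨A 0, B 0, hAB 0, subset_rfl, by simp, ?_⟩
    intro k hk
    interval_cases k
    simp
  | succ m ih =>
    obtain ⟨p, q, hpq, hsub0, himg, hall⟩ := ih (fun k hk => hcov k (Nat.lt_succ_of_lt hk))
    obtain ⟨α, β, hαβ, hαβsub, hαβimg⟩ := hcov m (Nat.lt_succ_self m)
    -- pull back [α,β] through f^[m] on [p,q]
    have hcont : Continuous (f^[m]) := hf.iterate m
    have hαβ' : Icc α β ⊆ f^[m] '' Icc p q := by rw [himg]; exact hαβsub
    obtain ⟨p', q', hpq', hsub', himg'⟩ := pullback (f^[m]) hcont hpq hαβ hαβ'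
    refine ⟨p', q', hpq', subset_trans hsub' hsub0, ?_, ?_⟩
    · have heq : f^[m+1] '' Icc p' q' = f '' (f^[m] '' Icc p' q') := by
        rw [Function.iterate_succ', image_comp]
      rw [heq, himg', hαβimg]
    · intro k hk
      by_cases hkm : k ≤ m
      · exact subset_trans (image_mono hsub') (hall k hkm)
      · have hkeq : k = m + 1 := le_antisymm hk (Nat.succ_le_of_lt (not_le.mp hkm))
        subst hkeq
        have heq : f^[m+1] '' Icc p' q' = f '' (f^[m] '' Icc p' q') := by
          rw [Function.iterate_succ', image_comp]
        rw [heq, himg', hαβimg]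

/-- A cyclic loop of covering relations between compact intervals
`I j = [a j, b j]`, `j = 0,…,n-1` (with `n ≥ 1`), yields a point `x ∈ I 0`
with `fⁿ(x) = x` whose orbit follows the loop. -/
theorem stmt_2 (f : ℝ → ℝ) (hf : Continuous f) (n : ℕ) [NeZero n]
    (a b : Fin n → ℝ) (hab : ∀ j, a j ≤ b j)
    (hcov : ∀ j : Fin n, Covers f (Set.Icc (a j) (b j)) (Set.Icc (a (j + 1)) (b (j + 1)))) :
    ∃ x ∈ Set.Icc (a 0) (b 0), f^[n] x = x ∧
      ∀ j : Fin n, f^[(j : ℕ)] x ∈ Set.Icc (a j) (b j) := by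
  open Fin.NatCast in set A : ℕ → ℝ := fun k => a (k : Fin n) with hA
  open Fin.NatCast in set B : ℕ → ℝ := fun k => b (k : Fin n) with hB
  have hchain : ∀ k < n, Covers f (Set.Icc (A k) (B k)) (Set.Icc (A (k+1)) (B (k+1))) := by
    intro k hk
    open Fin.NatCast in have : ((k+1 : ℕ) : Fin n) = (k : Fin n) + 1 := by push_cast; ring
    simp only [hA, hB, this]
    open Fin.NatCast in exact hcov (k : Fin n)
  obtain ⟨p, q, hpq, hsub, himg, hall⟩ := chain_lemma f hf A B (fun k => hab _) n hchain
  have hAn : A n = A 0 := by simp [hA]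
  have hBn : B n = B 0 := by simp [hB]
  rw [hAn, hBn] at himg
  -- fixed point of f^[n] in [p,q]
  have hA0 : A 0 = a 0 := by simp [hA]
  have hB0 : B 0 = b 0 := by simp [hB]
  have hcont : Continuous (f^[n]) := hf.iterate n
  have hsub' : Set.Icc p q ⊆ Set.Icc (A 0) (B 0) := hsub
  have hp0 : p ∈ Set.Icc (A 0) (B 0) := hsub (Set.left_mem_Icc.mpr hpq)
  have hq0 : q ∈ Set.Icc (A 0) (B 0) := hsub (Set.right_mem_Icc.mpr hpq)
  obtain ⟨u, hu, hgu⟩ : ∃ u ∈ Set.Icc p q, f^[n] u = p := by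
    have := himg ▸ hp0
    obtain ⟨u, hu, hgu⟩ := this
    exact ⟨u, hu, hgu⟩
  obtain ⟨v, hv, hgv⟩ : ∃ v ∈ Set.Icc p q, f^[n] v = q := by
    have := himg ▸ hq0
    obtain ⟨v, hv, hgv⟩ := this
    exact ⟨v, hv, hgv⟩
  set h : ℝ → ℝ := fun x => f^[n] x - x with hh
  have hhc : Continuous h := hcont.sub continuous_id
  have hhu : h u ≤ 0 := by simp only [hh]; rw [hgu]; linarith [hu.1]
  have hhv : 0 ≤ h v := by simp only [hh]; rw [hgv]; linarith [hv.2]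
  have h0 : (0:ℝ) ∈ Set.uIcc (h u) (h v) := Set.mem_uIcc.mpr (Or.inl ⟨hhu, hhv⟩)
  obtain ⟨x, hx, hhx⟩ := intermediate_value_uIcc hhc.continuousOn h0
  have hxpq : x ∈ Set.Icc p q := by
    have : Set.uIcc u v ⊆ Set.Icc p q := Set.uIcc_subset_Icc hu hv
    exact this hx
  have hfix : f^[n] x = x := by
    have : f^[n] x - x = 0 := hhx
    linarith
  refine ⟨x, ?_, hfix, ?_⟩
  · rw [← hA0, ← hB0]; exact hsub hxpq
  · intro j
    have h1 : f^[(j : ℕ)] x ∈ Set.Icc (A (j : ℕ)) (B (j : ℕ)) :=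
      hall (j : ℕ) (le_of_lt j.isLt) (Set.mem_image_of_mem _ hxpq)
    open Fin.NatCast in have h2 : ((j : ℕ) : Fin n) = j := Fin.cast_val_eq_self j
    simpa [hA, hB, h2] using h1
end

section
/- Let f : ℝ → ℝ be continuous, and let I₀, I₁ be compact intervals with disjoint interiors such that each of I₀, I₁ f-covers both I₀ and I₁ (a one-dimensional topological horseshoe). Then for every n ≥ 1 and every sequence (i₀,…,i_{n-1}) ∈ {0,1}^n there exists x with f^n(x) = x and f^j(x) ∈ I_{i_j} for all j = 0,…,n-1. -/
/-- Pull back an interval: if `f p = c`, `f q = d` with `p ≤ q`, `c ≤ d`, there is a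
subinterval of `[p,q]` mapped exactly onto `[c,d]`. -/
lemma pullback_lemma (f : ℝ → ℝ) (hf : Continuous f) (p q c d : ℝ) (hpq : p ≤ q)
    (hc : f p = c) (hd : f q = d) (hcd : c ≤ d) :
    ∃ u v, u ≤ v ∧ Set.Icc u v ⊆ Set.Icc p q ∧ f '' Set.Icc u v = Set.Icc c d := by
  set T : Set ℝ := Set.Icc p q ∩ f ⁻¹' {d} with hT
  have hTne : T.Nonempty := ⟨q, ⟨hpq, le_refl q⟩, hd⟩
  have hTclosed : IsClosed T := isClosed_Icc.inter (isClosed_singleton.preimage hf)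
  have hTbdd : BddBelow T := ⟨p, fun x hx => hx.1.1⟩
  have hvmem : sInf T ∈ T := hTclosed.csInf_mem hTne hTbdd
  set v := sInf T with hv
  have hpv : p ≤ v := hvmem.1.1
  have hvq : v ≤ q := hvmem.1.2
  have hfv : f v = d := hvmem.2
  set S : Set ℝ := Set.Icc p v ∩ f ⁻¹' {c} with hS
  have hSne : S.Nonempty := ⟨p, ⟨le_refl p, hpv⟩, hc⟩
  have hSclosed : IsClosed S := isClosed_Icc.inter (isClosed_singleton.preimage hf)
  have hSbdd : BddAbove S := ⟨v, fun x hx => hx.1.2⟩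
  have humem : sSup S ∈ S := hSclosed.csSup_mem hSne hSbdd
  set u := sSup S with hu
  have hpu : p ≤ u := humem.1.1
  have huv : u ≤ v := humem.1.2
  have hfu : f u = c := humem.2
  refine ⟨u, v, huv, Set.Icc_subset_Icc hpu hvq, Set.Subset.antisymm ?_ ?_⟩
  · rintro y ⟨x, hx, rfl⟩
    constructor
    · by_contra h
      push_neg at h
      have hux : u < x := by
        rcases lt_or_eq_of_le hx.1 with h' | h'
        · exact h'
        · rw [← h', hfu] at h; exact absurd h (lt_irrefl c)
      have hcm : c ∈ Set.Icc (f x) (f v) := ⟨le_of_lt h, hfv ▸ hcd⟩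
      obtain ⟨y, hy, hfy⟩ := intermediate_value_Icc hx.2 hf.continuousOn hcm
      have hyS : y ∈ S := ⟨⟨le_trans hpu (le_trans hux.le hy.1), hy.2⟩, hfy⟩
      have : y ≤ u := le_csSup hSbdd hyS
      linarith [hy.1]
    · by_contra h
      push_neg at h
      have hxv : x < v := by
        rcases lt_or_eq_of_le hx.2 with h' | h'
        · exact h'
        · rw [h', hfv] at h; exact absurd h (lt_irrefl d)
      have hdm : d ∈ Set.Icc (f u) (f x) := ⟨hfu ▸ hcd, le_of_lt h⟩
      obtain ⟨y, hy, hfy⟩ := intermediate_value_Icc hx.1 hf.continuousOn hdm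
      have hyT : y ∈ T := ⟨⟨le_trans hpu hy.1, le_trans hy.2 (le_trans hxv.le hvq)⟩, hfy⟩
      have : v ≤ y := csInf_le hTbdd hyT
      linarith [hy.2]
  · have := intermediate_value_Icc huv hf.continuousOn
    rw [hfu, hfv] at this
    exact this

/-- Cover refinement: if `f` covers `J` from `I`, any compact subinterval of `J`
is the exact image of a compact subinterval of `I`. -/
lemma cover_refine (f : ℝ → ℝ) (hf : Continuous f) (I : Set ℝ) (A B : ℝ)
    (hcov : Covers f I (Set.Icc A B)) (c d : ℝ) (hcd : c ≤ d)
    (hsub : Set.Icc c d ⊆ Set.Icc A B) :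
    ∃ u v, u ≤ v ∧ Set.Icc u v ⊆ I ∧ f '' Set.Icc u v = Set.Icc c d := by
  obtain ⟨α, β, hαβ, hIc, hImg⟩ := hcov
  have hcmem : c ∈ f '' Set.Icc α β := hImg ▸ hsub ⟨le_refl c, hcd⟩
  have hdmem : d ∈ f '' Set.Icc α β := hImg ▸ hsub ⟨hcd, le_refl d⟩
  obtain ⟨p, hp, hfp⟩ := hcmem
  obtain ⟨q, hq, hfq⟩ := hdmem
  rcases le_total p q with hpq | hqp
  · obtain ⟨u, v, huv, hsub', himg⟩ := pullback_lemma f hf p q c d hpq hfp hfq hcd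
    exact ⟨u, v, huv, fun x hx => hIc (Set.Icc_subset_Icc hp.1 hq.2 (hsub' hx)), himg⟩
  · -- use the reflection trick
    have hg : Continuous (fun x : ℝ => f (-x)) := hf.comp continuous_neg
    obtain ⟨u, v, huv, hsub', himg⟩ := pullback_lemma (fun x => f (-x)) hg (-p) (-q) c d
      (neg_le_neg hqp) (by simp [hfp]) (by simp [hfq]) hcd
    refine ⟨-v, -u, neg_le_neg huv, ?_, ?_⟩
    · intro x hx
      have hx' : -x ∈ Set.Icc u v := ⟨le_neg_of_le_neg hx.2, neg_le_of_neg_le hx.1⟩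
      have := hsub' hx'
      have hxpq : x ∈ Set.Icc q p := ⟨by linarith [this.2], by linarith [this.1]⟩
      exact hIc (Set.Icc_subset_Icc hq.1 hp.2 hxpq)
    · rw [← himg]
      ext y
      constructor
      · rintro ⟨x, hx, rfl⟩
        exact ⟨-x, ⟨le_neg_of_le_neg hx.2, neg_le_of_neg_le hx.1⟩, by simp⟩
      · rintro ⟨x, hx, rfl⟩
        exact ⟨-x, ⟨neg_le_neg hx.2, neg_le_neg hx.1⟩, by simp⟩

/-- Fixed point of a continuous map on an interval whose image contains it. -/
lemma fixed_point_lemma (g : ℝ → ℝ) (hg : Continuous g) (u v c d : ℝ) (huv : u ≤ v)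
    (himg : g '' Set.Icc u v = Set.Icc c d) (hsub : Set.Icc u v ⊆ Set.Icc c d) :
    ∃ x ∈ Set.Icc u v, g x = x := by
  have hcu : c ≤ u := (hsub ⟨le_refl u, huv⟩).1
  have hvd : v ≤ d := (hsub ⟨huv, le_refl v⟩).2
  have hcd : c ≤ d := le_trans hcu (le_trans huv hvd)
  obtain ⟨p, hp, hfp⟩ : c ∈ g '' Set.Icc u v := himg ▸ (⟨le_refl c, hcd⟩ : c ∈ Set.Icc c d)
  obtain ⟨q, hq, hfq⟩ : d ∈ g '' Set.Icc u v := himg ▸ (⟨hcd, le_refl d⟩ : d ∈ Set.Icc c d)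
  have hcont : Continuous (fun x => g x - x) := hg.sub continuous_id
  have h0 : (0 : ℝ) ∈ Set.uIcc (g p - p) (g q - q) := by
    rw [Set.mem_uIcc]
    left
    constructor
    · rw [hfp]; linarith [hp.1]
    · rw [hfq]; linarith [hq.2]
  obtain ⟨x, hx, hfx⟩ := intermediate_value_uIcc hcont.continuousOn h0
  have : g x - x = 0 := hfx
  exact ⟨x, Set.uIcc_subset_Icc hp hq hx, by linarith⟩

/-- Itinerary intervals: for every finite itinerary there is a compact interval whose
iterates follow the itinerary and whose `m`-th iterate image is the full target interval. -/
lemma itinerary_lemma (f : ℝ → ℝ) (hf : Continuous f)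
    (a b : Fin 2 → ℝ) (hab : ∀ i, a i ≤ b i)
    (hcov : ∀ i j : Fin 2, Covers f (Set.Icc (a i) (b i)) (Set.Icc (a j) (b j))) :
    ∀ m : ℕ, ∀ s : ℕ → Fin 2,
      ∃ u v, u ≤ v ∧ Set.Icc u v ⊆ Set.Icc (a (s 0)) (b (s 0)) ∧
        f^[m] '' Set.Icc u v = Set.Icc (a (s m)) (b (s m)) ∧
        ∀ j < m, f^[j] '' Set.Icc u v ⊆ Set.Icc (a (s j)) (b (s j)) := by
  intro m
  induction m with
  | zero =>
    intro s
    exact ⟨a (s 0), b (s 0), hab _, Set.Subset.refl _,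
      by simp [Function.iterate_zero, Set.image_id], fun j hj => absurd hj (Nat.not_lt_zero j)⟩
  | succ m ih =>
    intro s
    obtain ⟨u, v, huv, hsub0, himg, hall⟩ := ih (fun k => s (k + 1))
    obtain ⟨u', v', huv', hsub', himg'⟩ := cover_refine f hf _ (a (s 1)) (b (s 1))
      (hcov (s 0) (s 1)) u v huv hsub0
    refine ⟨u', v', huv', hsub', ?_, ?_⟩
    · rw [Function.iterate_succ, Set.image_comp, himg', himg]
    · intro j hj
      match j with
      | 0 => simpa using hsub'
      | (k+1) =>
        rw [Function.iterate_succ, Set.image_comp, himg']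
        exact hall k (by omega)

/-- One-dimensional topological horseshoe: two compact intervals with disjoint
interiors, each f-covering both, yield orbits following every finite itinerary. -/
theorem stmt_3 (f : ℝ → ℝ) (hf : Continuous f)
    (a b : Fin 2 → ℝ) (hab : ∀ i, a i ≤ b i)
    (hdisj : Disjoint (interior (Set.Icc (a 0) (b 0))) (interior (Set.Icc (a 1) (b 1))))
    (hcov : ∀ i j : Fin 2, Covers f (Set.Icc (a i) (b i)) (Set.Icc (a j) (b j))) :
    ∀ n : ℕ, 1 ≤ n → ∀ seq : Fin n → Fin 2,
      ∃ x : ℝ, f^[n] x = x ∧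
        ∀ j : Fin n, f^[(j : ℕ)] x ∈ Set.Icc (a (seq j)) (b (seq j)) := by
  intro n hn seq
  have hnpos : 0 < n := hn
  set s : ℕ → Fin 2 := fun k => seq ⟨k % n, Nat.mod_lt k hnpos⟩ with hs
  obtain ⟨u, v, huv, hsub0, himg, hall⟩ := itinerary_lemma f hf a b hab hcov n s
  have hsn : s n = s 0 := by simp [hs, Nat.mod_self, Nat.zero_mod]
  rw [hsn] at himg
  obtain ⟨x, hx, hfx⟩ := fixed_point_lemma (f^[n]) (hf.iterate n) u v _ _ huv himg
    (Set.Subset.trans (Set.Subset.refl _) hsub0)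
  refine ⟨x, hfx, fun j => ?_⟩
  have hj : (j : ℕ) < n := j.isLt
  have hsj : s (j : ℕ) = seq j := by
    simp only [hs]
    congr 1
    exact Fin.ext (Nat.mod_eq_of_lt hj)
  have := hall (j : ℕ) hj ⟨x, hx, rfl⟩
  rwa [hsj] at this
end

section
/- Let f : ℝ² → ℝ² be continuous and let N₀, N₁, …, N_{n-1} be two-dimensional h-sets in 𝒞(r) (rectangles [a_i,b_i] × [−r,r]) forming a loop of horizontal covering relations: N_j f-covers N_{j+1 mod n} horizontally for all j. Then there exists x ∈ int N₀ with f^n(x) = x and f^j(x) ∈ int N_j for j = 0, …, n−1. -/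
/-- The h-set `[a,b] × [-r,r] ⊂ ℝ²`. -/
def HSet (a b r : ℝ) : Set (ℝ × ℝ) := Set.Icc a b ×ˢ Set.Icc (-r) r

/-- Left edge `{a} × [-r,r]`. -/
def LeftEdge (a r : ℝ) : Set (ℝ × ℝ) := ({a} : Set ℝ) ×ˢ Set.Icc (-r) r

/-- Right edge `{b} × [-r,r]`. -/
def RightEdge (b r : ℝ) : Set (ℝ × ℝ) := ({b} : Set ℝ) ×ˢ Set.Icc (-r) r

/-- Horizontal boundary `[a,b] × {-r,r}`. -/
def HorizBdry (a b r : ℝ) : Set (ℝ × ℝ) := Set.Icc a b ×ˢ ({-r, r} : Set ℝ)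

/-- Left side `(-∞,a) × ℝ`. -/
def LeftSide (a : ℝ) : Set (ℝ × ℝ) := Set.Iio a ×ˢ (Set.univ : Set ℝ)

/-- Right side `(b,∞) × ℝ`. -/
def RightSide (b : ℝ) : Set (ℝ × ℝ) := Set.Ioi b ×ˢ (Set.univ : Set ℝ)

/-- `N₀ = [a₀,b₀] × [-r,r]` `g`-covers `N₁ = [a₁,b₁] × [-r,r]` horizontally. -/
def CoversH (g : ℝ × ℝ → ℝ × ℝ) (a₀ b₀ a₁ b₁ r : ℝ) : Prop :=
  g '' HSet a₀ b₀ r ⊆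
      (LeftSide a₁ ∪ HSet a₁ b₁ r ∪ RightSide b₁) \ HorizBdry a₁ b₁ r ∧
  ((g '' LeftEdge a₀ r ⊆ LeftSide a₁ ∧ g '' RightEdge b₀ r ⊆ RightSide b₁) ∨
   (g '' LeftEdge a₀ r ⊆ RightSide b₁ ∧ g '' RightEdge b₀ r ⊆ LeftSide a₁))



open Set Complex

noncomputable section

lemma clampI_mem (t : ℝ) : max 0 (min t 1) ∈ Icc (0:ℝ) 1 :=
  ⟨le_max_left _ _, max_le zero_le_one (min_le_right _ _)⟩

lemma clampI_lip (s t : ℝ) : |max 0 (min s 1) - max 0 (min t 1)| ≤ |s - t| := by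
  calc |max 0 (min s 1) - max 0 (min t 1)|
      = |min s 1 ⊔ 0 - min t 1 ⊔ 0| := by rw [max_comm 0 _, max_comm 0 _]
    _ ≤ |min s 1 - min t 1| := abs_max_sub_max_le_abs _ _ _
    _ ≤ max |s - t| |(1:ℝ) - 1| := abs_min_sub_min_le_max _ _ _ _
    _ ≤ |s - t| := by simp

/-- Rouché-type positivity: if `|z - w| < |w|` then `Re(z/w) > 0`. -/
lemma rouche_re {z w : ℂ} (hw : w ≠ 0) (h : ‖z - w‖ < ‖w‖) :
    0 < (z / w).re := by
  have h2 : Complex.normSq (z - w) < Complex.normSq w := by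
    have e1 := Complex.sq_norm (z - w); have e2 := Complex.sq_norm w
    nlinarith [norm_nonneg (z-w), norm_nonneg w]
  have hS : 0 < z.re * w.re + z.im * w.im := by
    simp only [Complex.normSq_apply, Complex.sub_re, Complex.sub_im] at h2
    nlinarith [sq_nonneg z.re, sq_nonneg z.im]
  have hn : 0 < Complex.normSq w := Complex.normSq_pos.2 hw
  rw [Complex.div_re, ← add_div]
  positivity

lemma rouche_slit {z w : ℂ} (hw : w ≠ 0) (h : ‖z - w‖ < ‖w‖) :
    z / w ∈ Complex.slitPlane := Or.inl (rouche_re hw h)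

/-- `θ` is a continuous argument lift of `δ` on `[0,1]`. -/
def IsLift (δ : ℝ → ℂ) (θ : ℝ → ℝ) : Prop :=
  Continuous θ ∧ ∀ t ∈ Icc (0:ℝ) 1, δ t = (‖δ t‖ : ℂ) * Complex.exp (θ t * Complex.I)

lemma IsLift.exp_eq {δ : ℝ → ℂ} {θ : ℝ → ℝ} (h : IsLift δ θ) (h0 : ∀ t, δ t ≠ 0)
    {t : ℝ} (ht : t ∈ Icc (0:ℝ) 1) :
    Complex.exp (θ t * Complex.I) = δ t / (‖δ t‖ : ℂ) := by
  have ha : (‖δ t‖ : ℂ) ≠ 0 := by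
    simpa using (norm_ne_zero_iff.mpr (h0 t))
  rw [eq_div_iff ha, mul_comm, ← h.2 t ht]

lemma exp_arg_eq {z : ℂ} (hz : z ≠ 0) :
    Complex.exp ((Complex.arg z : ℝ) * Complex.I) = z / (‖z‖ : ℂ) := by
  have ha : (‖z‖ : ℂ) ≠ 0 := by simpa using (norm_ne_zero_iff.mpr hz)
  rw [eq_div_iff ha, mul_comm, Complex.norm_mul_exp_arg_mul_I]

/-- Existence of a continuous argument lift, for `δ` continuous, nonvanishing,
and constant outside `[0,1]` (clamped). -/
lemma exists_isLift (δ : ℝ → ℂ) (hc : Continuous δ) (h0 : ∀ t, δ t ≠ 0)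
    (hcl : ∀ t, δ t = δ (max 0 (min t 1))) : ∃ θ, IsLift δ θ := by
  classical
  obtain ⟨t₀, ht₀, hmin⟩ := isCompact_Icc.exists_isMinOn (f := fun t => ‖δ t‖)
    (nonempty_Icc.2 zero_le_one) ((continuous_norm.comp hc).continuousOn)
  set ε : ℝ := ‖δ t₀‖ with hε
  have hεpos : 0 < ε := norm_pos_iff.mpr (h0 t₀)
  have hεle : ∀ t : ℝ, ε ≤ ‖δ t‖ := by
    intro t
    rw [hcl t]
    exact hmin (clampI_mem t)
  have huc : UniformContinuousOn δ (Icc 0 1) :=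
    isCompact_Icc.uniformContinuousOn_of_continuous hc.continuousOn
  rw [Metric.uniformContinuousOn_iff] at huc
  obtain ⟨d, hd, hdp⟩ := huc ε hεpos
  obtain ⟨n, hn⟩ := exists_nat_one_div_lt hd
  set N : ℝ := (n : ℝ) + 1 with hN
  have hNpos : (0:ℝ) < N := by positivity
  have step : ∀ s t : ℝ, |s - t| ≤ 1 / N → 0 < (δ s / δ t).re ∧ δ s / δ t ∈ Complex.slitPlane := by
    intro s t hst
    have hab : ‖δ s - δ t‖ < ‖δ t‖ := by
      have h1 : dist (δ s) (δ t) < ε := by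
        rw [hcl s, hcl t]
        apply hdp _ (clampI_mem s) _ (clampI_mem t)
        have : dist (max 0 (min s 1)) (max 0 (min t 1)) ≤ |s - t| := by
          rw [Real.dist_eq]; exact clampI_lip s t
        calc dist (max 0 (min s 1)) (max 0 (min t 1)) ≤ |s - t| := this
          _ ≤ 1 / N := hst
          _ < d := hn
      rw [Complex.dist_eq] at h1
      exact lt_of_lt_of_le h1 (hεle t)
    exact ⟨rouche_re (h0 t) hab, rouche_slit (h0 t) hab⟩
  -- inductive construction
  have main : ∀ k : ℕ, ∃ θ : ℝ → ℝ, Continuous θ ∧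
      ∀ t ∈ Icc (0:ℝ) (k / N), δ t = (‖δ t‖ : ℂ) * Complex.exp (θ t * Complex.I) := by
    intro k
    induction k with
    | zero =>
      refine ⟨fun _ => Complex.arg (δ 0), continuous_const, ?_⟩
      intro t ht
      simp only [Nat.cast_zero, zero_div] at ht
      have : t = 0 := le_antisymm ht.2 ht.1
      subst this
      exact (Complex.norm_mul_exp_arg_mul_I (δ 0)).symm
    | succ k ih =>
      obtain ⟨θ, hθc, hθ⟩ := ih
      set q : ℝ := (k : ℝ) / N with hq
      set q' : ℝ := ((k : ℝ) + 1) / N with hq'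
      have hq0 : 0 ≤ q := by positivity
      have hqq' : q ≤ q' := by
        rw [hq, hq']
        gcongr
        linarith
      set m : ℝ → ℝ := fun t => max q (min t q') with hm
      have hmc : Continuous m := continuous_const.max (continuous_id.min continuous_const)
      have hmmem : ∀ t, m t ∈ Icc q q' := fun t =>
        ⟨le_max_left _ _, max_le hqq' (min_le_right _ _)⟩
      have hmdist : ∀ t, |m t - q| ≤ 1 / N := by
        intro t
        rcases hmmem t with ⟨h1, h2⟩
        have hN1 : (0:ℝ) ≤ 1 / N := by positivity
        have : q' - q = 1 / N := by rw [hq, hq']; ring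
        rw [abs_le]
        constructor
        · linarith
        · linarith
      have hre : ∀ t, 0 < (δ (m t) / δ q).re := fun t => (step _ _ (hmdist t)).1
      have hslit : ∀ t, δ (m t) / δ q ∈ Complex.slitPlane := fun t => (step _ _ (hmdist t)).2
      have hq2 : Continuous fun t => δ (m t) / δ q := (hc.comp hmc).div_const _
      have hargc : Continuous fun t => Complex.arg (δ (m t) / δ q) := by
        rw [continuous_iff_continuousAt]
        intro t
        exact ContinuousAt.comp (x := t) (Complex.continuousAt_arg (hslit t)) hq2.continuousAt
      set g : ℝ → ℝ := fun t => θ q + Complex.arg (δ (m t) / δ q) with hg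
      have hgc : Continuous g := continuous_const.add hargc
      have hgluec : Continuous fun t => if t ≤ q then θ t else g t := by
        apply Continuous.if_le hθc hgc continuous_id continuous_const
        intro t ht
        have ht' : t = q := ht
        have hmq : m t = q := by
          rw [hm]
          simp only
          rw [ht', min_eq_left hqq', max_eq_left le_rfl]
        have hmq' : m q = q := ht' ▸ hmq
        simp only [hg, ht', hmq', div_self (h0 q), Complex.arg_one, add_zero]
      refine ⟨fun t => if t ≤ q then θ t else g t, hgluec, ?_⟩
      intro t ht
      by_cases htq : t ≤ q
      · simp only [htq, if_pos]
        exact hθ t ⟨ht.1, htq⟩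
      · simp only [htq, if_neg, not_false_iff]
        push_neg at htq
        have hmt : m t = t := by
          rw [hm]
          simp only
          rw [min_eq_left (by push_cast at ht ⊢; linarith [ht.2]), max_eq_right htq.le]
        have hqmem : q ∈ Icc (0:ℝ) q := ⟨hq0, le_refl _⟩
        have hexpq : Complex.exp ((θ q : ℝ) * Complex.I) = δ q / (‖δ q‖ : ℂ) := by
          have ha : (‖δ q‖ : ℂ) ≠ 0 := by simpa using (norm_ne_zero_iff.mpr (h0 q))
          rw [eq_div_iff ha, mul_comm, ← hθ q hqmem]
        have hρ : δ t / δ q ≠ 0 := div_ne_zero (h0 t) (h0 q)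
        have hexpa : Complex.exp ((Complex.arg (δ t / δ q) : ℝ) * Complex.I)
            = (δ t / δ q) / (‖δ t / δ q‖ : ℂ) := exp_arg_eq hρ
        rw [hg]
        simp only [hmt]
        rw [show ((θ q + Complex.arg (δ t / δ q) : ℝ) : ℂ) * Complex.I
            = (θ q : ℝ) * Complex.I + (Complex.arg (δ t / δ q) : ℝ) * Complex.I by push_cast; ring]
        rw [Complex.exp_add, hexpq, hexpa]
        have haq : (‖δ q‖ : ℂ) ≠ 0 := by simpa using (norm_ne_zero_iff.mpr (h0 q))
        have hat : (‖δ t‖ : ℂ) ≠ 0 := by simpa using (norm_ne_zero_iff.mpr (h0 t))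
        rw [norm_div]
        push_cast
        have key : ∀ (u v au av : ℂ), u ≠ 0 → v ≠ 0 → au ≠ 0 → av ≠ 0 →
            au * (v / av * (u / v / (au / av))) = u := by
          intros u v au av hu hv hau hav
          field_simp
        exact (key (δ t) (δ q) _ _ (h0 t) (h0 q) hat haq).symm
  obtain ⟨θ, hθc, hθ⟩ := main (n + 1)
  refine ⟨θ, hθc, ?_⟩
  intro t ht
  apply hθ t
  have : ((n:ℝ) + 1) / N = 1 := by rw [hN]; field_simp
  rw [show ((((n+1):ℕ) : ℝ) / N) = ((n:ℝ)+1)/N by push_cast; ring, this]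
  exact ht

/-- Re/Im of a lifted value. -/
lemma lift_re_im {δ : ℝ → ℂ} {θ : ℝ → ℝ} (h : IsLift δ θ) {t : ℝ} (ht : t ∈ Icc (0:ℝ) 1) :
    (δ t).re = ‖δ t‖ * Real.cos (θ t) ∧
    (δ t).im = ‖δ t‖ * Real.sin (θ t) := by
  have := h.2 t ht
  constructor
  · conv_lhs => rw [this]
    simp [Complex.mul_re, Complex.exp_ofReal_mul_I_re, Complex.exp_ofReal_mul_I_im]
  · conv_lhs => rw [this]
    simp [Complex.mul_im, Complex.exp_ofReal_mul_I_re, Complex.exp_ofReal_mul_I_im]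

/-- Two lifts of the same nonvanishing loop-path have the same total variation. -/
lemma lift_diff_eq {δ : ℝ → ℂ} {θ₁ θ₂ : ℝ → ℝ} (h1 : IsLift δ θ₁) (h2 : IsLift δ θ₂)
    (h0 : ∀ t, δ t ≠ 0) : θ₁ 1 - θ₁ 0 = θ₂ 1 - θ₂ 0 := by
  have hval : ∀ t ∈ Icc (0:ℝ) 1, ∃ k : ℤ, θ₁ t - θ₂ t = k * (2 * Real.pi) := by
    intro t ht
    have e1 := h1.exp_eq h0 ht
    have e2 := h2.exp_eq h0 ht
    have : Complex.exp ((θ₁ t : ℝ) * Complex.I - (θ₂ t : ℝ) * Complex.I) = 1 := by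
      rw [Complex.exp_sub, e1, e2, div_self]
      apply div_ne_zero (h0 t)
      simpa using (norm_ne_zero_iff.mpr (h0 t))
    rw [show ((θ₁ t : ℝ) : ℂ) * Complex.I - ((θ₂ t : ℝ)) * Complex.I
        = ((θ₁ t - θ₂ t : ℝ) : ℂ) * Complex.I by push_cast; ring] at this
    obtain ⟨k, hk⟩ := Complex.exp_eq_one_iff.1 this
    refine ⟨k, ?_⟩
    have := hk
    have h3 : ((θ₁ t - θ₂ t : ℝ) : ℂ) * Complex.I = ((k * (2 * Real.pi) : ℝ) : ℂ) * Complex.I := by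
      rw [hk]; push_cast; ring
    have h4 := mul_right_cancel₀ Complex.I_ne_zero h3
    exact_mod_cast h4
  -- d := θ₁ - θ₂ is continuous on [0,1] with values in 2πℤ, hence d 0 = d 1.
  set d : ℝ → ℝ := fun t => θ₁ t - θ₂ t with hd
  have hdc : Continuous d := h1.1.sub h2.1
  obtain ⟨k0, hk0⟩ := hval 0 ⟨le_refl _, zero_le_one⟩
  obtain ⟨k1, hk1⟩ := hval 1 ⟨zero_le_one, le_refl _⟩
  have hpi : 0 < Real.pi := Real.pi_pos
  by_contra hne
  have hne' : d 0 ≠ d 1 := by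
    intro h
    apply hne
    have : θ₁ 0 - θ₂ 0 = θ₁ 1 - θ₂ 1 := h
    linarith
  have hk01 : k0 ≠ k1 := by
    intro h; apply hne'; rw [hd]; simp only; rw [show θ₁ 0 - θ₂ 0 = (k0:ℝ) * (2*Real.pi) from hk0,
      show θ₁ 1 - θ₂ 1 = (k1:ℝ) * (2*Real.pi) from hk1, h]
  -- IVT: some odd multiple of π between d 0 and d 1, contradiction with hval
  have hd0 : d 0 = (k0:ℝ) * (2*Real.pi) := hk0
  have hd1 : d 1 = (k1:ℝ) * (2*Real.pi) := hk1
  have main : ∀ c : ℝ, c ∈ uIcc (d 0) (d 1) → (∃ j : ℤ, c = (2*j+1) * Real.pi) → False := by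
    intro c hc ⟨j, hj⟩
    obtain ⟨t, ht, hdt⟩ := intermediate_value_uIcc (hdc.continuousOn (s := uIcc 0 1)) hc
    have htI : t ∈ Icc (0:ℝ) 1 := by rw [uIcc_of_le (zero_le_one)] at ht; exact ht
    obtain ⟨k, hk⟩ := hval t htI
    have hdt' : θ₁ t - θ₂ t = c := hdt
    rw [hk, hj] at hdt'
    have h2 : 2*(k:ℝ) - 2*(j:ℝ) - 1 = 0 := by
      have hπ : ((2*(k:ℝ) - 2*(j:ℝ) - 1)) * Real.pi = 0 := by linarith
      rcases mul_eq_zero.1 hπ with h | h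
      · exact h
      · exact absurd h (ne_of_gt hpi)
    have : (2*k - 2*j - 1 : ℤ) = 0 := by exact_mod_cast h2
    omega
  rcases lt_or_gt_of_ne hk01 with h | h
  · have hle : (k0:ℝ) + 1 ≤ k1 := by exact_mod_cast h
    refine main ((2*(k0:ℝ)+1) * Real.pi) ?_ ⟨k0, by push_cast; ring⟩
    apply mem_uIcc.2; left
    rw [hd0, hd1]
    constructor <;> nlinarith
  · have hle : (k1:ℝ) + 1 ≤ k0 := by exact_mod_cast h
    refine main ((2*(k0:ℝ)-1) * Real.pi) ?_ ⟨k0 - 1, by push_cast; ring⟩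
    apply mem_uIcc.2; right
    rw [hd0, hd1]
    constructor <;> nlinarith

/-- Stay-in-component: a continuous function avoiding `c + pℤ` on an interval stays
in the component of a known value. -/
lemma stay_in_component {θ : ℝ → ℝ} (hθ : Continuous θ) {u v : ℝ}
    {c p : ℝ} (havoid : ∀ s ∈ Icc u v, ∀ k : ℤ, θ s ≠ c + k * p)
    {k : ℤ} {t₀ : ℝ} (ht₀ : t₀ ∈ Icc u v)
    (h0 : θ t₀ ∈ Ioo (c + k * p) (c + (k + 1) * p)) :
    ∀ t ∈ Icc u v, θ t ∈ Ioo (c + k * p) (c + (k + 1) * p) := by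
  intro t ht
  have hsub : uIcc t t₀ ⊆ Icc u v := uIcc_subset_Icc ht ht₀
  constructor
  · by_contra hle
    push_neg at hle
    have : c + k * p ∈ uIcc (θ t) (θ t₀) := mem_uIcc.2 (Or.inl ⟨hle, (h0.1).le⟩)
    obtain ⟨s, hs, hθs⟩ := intermediate_value_uIcc (hθ.continuousOn) this
    exact havoid s (hsub hs) k hθs
  · by_contra hle
    push_neg at hle
    have : c + (k+1) * p ∈ uIcc (θ t) (θ t₀) := mem_uIcc.2 (Or.inr ⟨(h0.2).le, hle⟩)
    obtain ⟨s, hs, hθs⟩ := intermediate_value_uIcc (hθ.continuousOn) this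
    have := havoid s (hsub hs) (k+1)
    apply this
    rw [hθs]; push_cast; ring

/-- Shifting a lift by a multiple of 2π. -/
lemma IsLift.shift {δ : ℝ → ℂ} {θ : ℝ → ℝ} (h : IsLift δ θ) (m : ℤ) :
    IsLift δ (fun t => θ t - m * (2 * Real.pi)) := by
  refine ⟨h.1.sub continuous_const, ?_⟩
  intro t ht
  rw [show ((θ t - m * (2*Real.pi) : ℝ) : ℂ) * Complex.I
      = (θ t : ℝ) * Complex.I - (m : ℂ) * (2 * (Real.pi:ℂ) * Complex.I) by push_cast; ring]
  rw [Complex.exp_sub, Complex.exp_int_mul_two_pi_mul_I]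
  simpa using h.2 t ht

/-- Transporting a lift along a pointwise slit-plane comparison. -/
lemma IsLift.transfer {δ δ' : ℝ → ℂ} {θ : ℝ → ℝ} (h : IsLift δ θ)
    (h0 : ∀ t, δ t ≠ 0) (h0' : ∀ t, δ' t ≠ 0)
    (hc : Continuous δ) (hc' : Continuous δ')
    (hslit : ∀ t, δ' t / δ t ∈ Complex.slitPlane) :
    IsLift δ' (fun t => θ t + Complex.arg (δ' t / δ t)) := by
  have hρc : Continuous fun t => δ' t / δ t := hc'.div hc h0
  have hargc : Continuous fun t => Complex.arg (δ' t / δ t) := by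
    rw [continuous_iff_continuousAt]
    intro t
    exact ContinuousAt.comp (x := t) (Complex.continuousAt_arg (hslit t)) hρc.continuousAt
  refine ⟨h.1.add hargc, ?_⟩
  intro t ht
  have hρ0 : δ' t / δ t ≠ 0 := div_ne_zero (h0' t) (h0 t)
  have e1 : Complex.exp ((θ t : ℝ) * Complex.I) = δ t / (‖δ t‖ : ℂ) :=
    h.exp_eq h0 ht
  have e2 : Complex.exp ((Complex.arg (δ' t / δ t) : ℝ) * Complex.I)
      = (δ' t / δ t) / (‖δ' t / δ t‖ : ℂ) := exp_arg_eq hρ0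
  rw [show ((θ t + Complex.arg (δ' t / δ t) : ℝ) : ℂ) * Complex.I
      = (θ t : ℝ) * Complex.I + (Complex.arg (δ' t / δ t) : ℝ) * Complex.I by push_cast; ring]
  rw [Complex.exp_add, e1, e2, norm_div]
  have hat : (‖δ t‖ : ℂ) ≠ 0 := by simpa using (norm_ne_zero_iff.mpr (h0 t))
  have hat' : (‖δ' t‖ : ℂ) ≠ 0 := by simpa using (norm_ne_zero_iff.mpr (h0' t))
  push_cast
  have key : ∀ (u v au av : ℂ), u ≠ 0 → v ≠ 0 → au ≠ 0 → av ≠ 0 →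
      au * (v / av * (u / v / (au / av))) = u := by
    intros u v au av hu hv hau hav
    field_simp
  exact (key (δ' t) (δ t) _ _ (h0' t) (h0 t) hat' hat).symm

/-- Convex combination stays in an interval. -/
lemma convex_comb_mem {lo hi x y s : ℝ} (hx : x ∈ Icc lo hi) (hy : y ∈ Icc lo hi)
    (hs : s ∈ Icc (0:ℝ) 1) : (1 - s) * x + s * y ∈ Icc lo hi := by
  obtain ⟨h1, h2⟩ := hx; obtain ⟨h3, h4⟩ := hy; obtain ⟨h5, h6⟩ := hs
  constructor <;> nlinarith

end

section key
variable {G : ℝ × ℝ → ℝ × ℝ} {a b r : ℝ}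

set_option maxHeartbeats 2000000 in
/-- The key fixed point theorem for a single self-covering. -/
theorem covers_fixed_point (hG : Continuous G) (hr : 0 < r) (hab : a ≤ b)
    (hcov : CoversH G a b a b r) : ∃ x ∈ HSet a b r, G x = x := by
  by_contra hfix
  push_neg at hfix
  have hπ : (0:ℝ) < Real.pi := Real.pi_pos
  have hImg : ∀ p ∈ HSet a b r,
      G p ∈ (LeftSide a ∪ HSet a b r ∪ RightSide b) \ HorizBdry a b r :=
    fun p hp => hcov.1 ⟨p, hp, rfl⟩
  -- the fixed-point displacement map as a complex function
  set Φ : ℝ × ℝ → ℂ :=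
    fun p => (((G p).1 - p.1 : ℝ) : ℂ) + (((G p).2 - p.2 : ℝ) : ℂ) * Complex.I with hΦ
  have hΦre : ∀ p, (Φ p).re = (G p).1 - p.1 := by intro p; simp [hΦ]
  have hΦim : ∀ p, (Φ p).im = (G p).2 - p.2 := by intro p; simp [hΦ]
  have hG1 : Continuous fun p : ℝ × ℝ => (G p).1 := continuous_fst.comp hG
  have hG2 : Continuous fun p : ℝ × ℝ => (G p).2 := continuous_snd.comp hG
  have hΦc : Continuous Φ := by
    apply Continuous.add
    · exact Complex.continuous_ofReal.comp (hG1.sub continuous_fst)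
    · exact (Complex.continuous_ofReal.comp (hG2.sub continuous_snd)).mul continuous_const
  have hΦ0 : ∀ p ∈ HSet a b r, Φ p ≠ 0 := by
    intro p hp h
    apply hfix p hp
    have h1 : (Φ p).re = 0 := by rw [h]; simp
    have h2 : (Φ p).im = 0 := by rw [h]; simp
    rw [hΦre] at h1
    rw [hΦim] at h2
    exact Prod.ext_iff.2 ⟨by linarith, by linarith⟩
  -- the boundary loop
  set w1 : ℝ → ℝ := fun t => max 0 (min (4*t) (min 1 (3 - 4*t))) with hw1
  set w2 : ℝ → ℝ := fun t => max 0 (min (4*t - 1) (min 1 (4 - 4*t))) with hw2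
  have hw1c : Continuous w1 := by fun_prop
  have hw2c : Continuous w2 := by fun_prop
  have hw1mem : ∀ t, w1 t ∈ Icc (0:ℝ) 1 := fun t =>
    ⟨le_max_left _ _, max_le zero_le_one ((min_le_right _ _).trans (min_le_left _ _))⟩
  have hw2mem : ∀ t, w2 t ∈ Icc (0:ℝ) 1 := fun t =>
    ⟨le_max_left _ _, max_le zero_le_one ((min_le_right _ _).trans (min_le_left _ _))⟩
  set γ : ℝ → ℝ × ℝ := fun t => (a + (b - a) * w1 t, -r + 2*r * w2 t) with hγ
  have hγc : Continuous γ := by fun_prop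
  have hγmem : ∀ t, γ t ∈ HSet a b r := by
    intro t
    obtain ⟨h1, h2⟩ := hw1mem t
    obtain ⟨h3, h4⟩ := hw2mem t
    refine ⟨⟨?_, ?_⟩, ⟨?_, ?_⟩⟩ <;> simp only [hγ] <;> nlinarith
  have hw1_right : ∀ t : ℝ, 1/4 ≤ t → t ≤ 1/2 → w1 t = 1 := by
    intro t h1 h2
    rw [hw1]
    simp only
    rw [min_eq_left (show (1:ℝ) ≤ 3 - 4*t by linarith),
      min_eq_right (show (1:ℝ) ≤ 4*t by linarith), max_eq_right zero_le_one]
  have hw1_left : ∀ t : ℝ, 3/4 ≤ t → w1 t = 0 := by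
    intro t h1
    rw [hw1]
    simp only
    apply max_eq_left
    exact (min_le_right _ _).trans ((min_le_right _ _).trans (by linarith))
  have hw1_zero : ∀ t : ℝ, t ≤ 0 → w1 t = 0 := by
    intro t h1
    rw [hw1]
    simp only
    exact max_eq_left ((min_le_left _ _).trans (by linarith))
  have hw2_bot : ∀ t : ℝ, t ≤ 1/4 → w2 t = 0 := by
    intro t h1
    rw [hw2]
    simp only
    exact max_eq_left ((min_le_left _ _).trans (by linarith))
  have hw2_top : ∀ t : ℝ, 1/2 ≤ t → t ≤ 3/4 → w2 t = 1 := by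
    intro t h1 h2
    rw [hw2]
    simp only
    rw [min_eq_left (show (1:ℝ) ≤ 4 - 4*t by linarith),
      min_eq_right (show (1:ℝ) ≤ 4*t - 1 by linarith), max_eq_right zero_le_one]
  have hw2_one : ∀ t : ℝ, 1 ≤ t → w2 t = 0 := by
    intro t h1
    rw [hw2]
    simp only
    apply max_eq_left
    exact (min_le_right _ _).trans ((min_le_right _ _).trans (by linarith))
  have hw1_one : ∀ t : ℝ, 1 ≤ t → w1 t = 0 := by
    intro t h1
    rw [hw1]
    simp only
    apply max_eq_left
    exact (min_le_right _ _).trans ((min_le_right _ _).trans (by linarith))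
  have hγ_right : ∀ t : ℝ, 1/4 ≤ t → t ≤ 1/2 → γ t ∈ RightEdge b r := by
    intro t h1 h2
    refine ⟨?_, (hγmem t).2⟩
    simp only [hγ, mem_singleton_iff]
    rw [hw1_right t h1 h2]
    ring
  have hγ_left : ∀ t : ℝ, 3/4 ≤ t → γ t ∈ LeftEdge a r := by
    intro t h1
    refine ⟨?_, (hγmem t).2⟩
    simp only [hγ, mem_singleton_iff]
    rw [hw1_left t h1]
    ring
  have hγ_0left : γ 0 ∈ LeftEdge a r := by
    refine ⟨?_, (hγmem 0).2⟩
    simp only [hγ, mem_singleton_iff]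
    rw [hw1_zero 0 le_rfl]
    ring
  have hγ_bot : ∀ t : ℝ, t ≤ 1/4 → (γ t).2 = -r := by
    intro t h1
    simp only [hγ]
    rw [hw2_bot t h1]
    ring
  have hγ_top : ∀ t : ℝ, 1/2 ≤ t → t ≤ 3/4 → (γ t).2 = r := by
    intro t h1 h2
    simp only [hγ]
    rw [hw2_top t h1 h2]
    ring
  have hγloop : γ 1 = γ 0 := by
    simp only [hγ]
    rw [hw1_one 1 le_rfl, hw2_one 1 le_rfl, hw1_zero 0 le_rfl, hw2_bot 0 (by norm_num)]
  have hw1clamp : ∀ t, w1 t = w1 (max 0 (min t 1)) := by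
    intro t
    rcases le_or_gt t 0 with h | h
    · rw [min_eq_left (by linarith : t ≤ (1:ℝ)), max_eq_left h,
        hw1_zero t h, hw1_zero 0 le_rfl]
    · rcases le_or_gt 1 t with h' | h'
      · rw [min_eq_right h', max_eq_right zero_le_one, hw1_one t h', hw1_one 1 le_rfl]
      · rw [min_eq_left h'.le, max_eq_right h.le]
  have hw2clamp : ∀ t, w2 t = w2 (max 0 (min t 1)) := by
    intro t
    rcases le_or_gt t 0 with h | h
    · rw [min_eq_left (by linarith : t ≤ (1:ℝ)), max_eq_left h,
        hw2_bot t (by linarith), hw2_bot 0 (by norm_num)]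
    · rcases le_or_gt 1 t with h' | h'
      · rw [min_eq_right h', max_eq_right zero_le_one, hw2_one t h', hw2_one 1 le_rfl]
      · rw [min_eq_left h'.le, max_eq_right h.le]
  -- the contraction homotopy
  set cs : ℝ → ℝ := fun s => max 0 (min s 1) with hcs
  have hcsc : Continuous cs := by fun_prop
  have hcsmem : ∀ s, cs s ∈ Icc (0:ℝ) 1 := fun s => clampI_mem s
  set pt : ℝ → ℝ → ℝ × ℝ := fun s t =>
    ((1 - cs s) * (γ t).1 + cs s * ((a+b)/2), (1 - cs s) * (γ t).2 + cs s * 0) with hpt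
  have hptmem : ∀ s t, pt s t ∈ HSet a b r := by
    intro s t
    exact ⟨convex_comb_mem (hγmem t).1 ⟨by linarith, by linarith⟩ (hcsmem s),
      convex_comb_mem (hγmem t).2 ⟨by linarith, by linarith⟩ (hcsmem s)⟩
  set H : ℝ → ℝ → ℂ := fun s t => Φ (pt s t) with hH
  have hH0 : ∀ s t, H s t ≠ 0 := fun s t => hΦ0 _ (hptmem s t)
  have hHt : ∀ s, Continuous (fun t => H s t) := by
    intro s
    apply hΦc.comp
    fun_prop
  have hHloop : ∀ s, H s 1 = H s 0 := by
    intro s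
    rw [hH]
    simp only [hpt, hγ]
    rw [hw1_one 1 le_rfl, hw2_one 1 le_rfl, hw1_zero 0 le_rfl, hw2_bot 0 (by norm_num)]
  have hHclamp : ∀ s t, H s t = H s (max 0 (min t 1)) := by
    intro s t
    rw [hH]
    simp only [hpt, hγ]
    rw [hw1clamp t, hw2clamp t]
  have hex : ∀ s : ℝ, ∃ θ, IsLift (fun t => H s t) θ :=
    fun s => exists_isLift _ (hHt s) (hH0 s) (fun t => hHclamp s t)
  set w : ℝ → ℝ := fun s => (hex s).choose 1 - (hex s).choose 0 with hwdef
  have hwlift : ∀ (s : ℝ) (θ' : ℝ → ℝ), IsLift (fun t => H s t) θ' → w s = θ' 1 - θ' 0 :=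
    fun s θ' h' => lift_diff_eq (hex s).choose_spec h' (hH0 s)
  -- w is locally constant
  have hΨc : Continuous (fun q : ℝ × ℝ => H q.1 q.2) := by
    apply hΦc.comp
    rw [hpt]
    fun_prop
  have hconst : ∀ s₀ : ℝ, ∀ᶠ s in nhds s₀, w s = w s₀ := by
    intro s₀
    obtain ⟨t₀, ht₀, hmin⟩ := isCompact_Icc.exists_isMinOn (f := fun t => ‖H s₀ t‖)
      (nonempty_Icc.2 zero_le_one) ((continuous_norm.comp (hHt s₀)).continuousOn)
    set ε := ‖H s₀ t₀‖ with hε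
    have hεpos : 0 < ε := norm_pos_iff.mpr (hH0 s₀ t₀)
    have hεle : ∀ t, ε ≤ ‖H s₀ t‖ := by
      intro t
      rw [hHclamp s₀ t]
      exact hmin (clampI_mem t)
    have hK : IsCompact (Icc (s₀-1) (s₀+1) ×ˢ Icc (0:ℝ) 1) := isCompact_Icc.prod isCompact_Icc
    have huc := hK.uniformContinuousOn_of_continuous hΨc.continuousOn
    rw [Metric.uniformContinuousOn_iff] at huc
    obtain ⟨d, hd, hdp⟩ := huc ε hεpos
    rw [Metric.eventually_nhds_iff]
    refine ⟨min d 1, lt_min hd zero_lt_one, ?_⟩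
    intro s hs
    have hsd : dist s s₀ < d := lt_of_lt_of_le hs (min_le_left _ _)
    have hs1 : |s - s₀| ≤ 1 := by
      rw [← Real.dist_eq]
      exact le_of_lt (lt_of_lt_of_le hs (min_le_right _ _))
    rw [abs_le] at hs1
    have hsmem : s ∈ Icc (s₀-1) (s₀+1) := ⟨by linarith [hs1.1], by linarith [hs1.2]⟩
    have hclose : ∀ t : ℝ, ‖H s t - H s₀ t‖ < ‖H s₀ t‖ := by
      intro t
      set t' := max 0 (min t 1) with ht'
      have h1 : dist (H s t') (H s₀ t') < ε := by
        have := hdp (s, t') ⟨hsmem, clampI_mem t⟩ (s₀, t')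
          ⟨⟨by linarith, by linarith⟩, clampI_mem t⟩ ?_
        · exact this
        · rw [Prod.dist_eq]
          simp only [dist_self]
          rw [max_eq_left dist_nonneg]
          exact hsd
      calc ‖H s t - H s₀ t‖ = ‖H s t' - H s₀ t'‖ := by
            rw [hHclamp s t, hHclamp s₀ t]
        _ = dist (H s t') (H s₀ t') := (Complex.dist_eq _ _).symm
        _ < ε := h1
        _ ≤ ‖H s₀ t‖ := hεle t
    have hslit : ∀ t, H s t / H s₀ t ∈ Complex.slitPlane :=
      fun t => rouche_slit (hH0 s₀ t) (hclose t)
    have hlift' := IsLift.transfer (δ := fun t => H s₀ t) (δ' := fun t => H s t)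
      (hex s₀).choose_spec (hH0 s₀) (hH0 s) (hHt s₀) (hHt s) hslit
    rw [hwlift s _ hlift']
    have hρeq : Complex.arg (H s 1 / H s₀ 1) = Complex.arg (H s 0 / H s₀ 0) := by
      rw [hHloop s, hHloop s₀]
    rw [hρeq, hwdef]
    ring
  have hlocconst : IsLocallyConstant w := by
    rw [IsLocallyConstant.iff_eventually_eq]
    exact hconst
  have hw2 : w 2 = 0 := by
    have hcs2 : cs 2 = 1 := by
      rw [hcs]
      simp only
      rw [min_eq_right (by norm_num), max_eq_right zero_le_one]
    have hconst2 : ∀ t : ℝ, H 2 t = Φ ((a+b)/2, 0) := by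
      intro t
      rw [hH]
      simp only [hpt, hcs2]
      norm_num
    have hcl : IsLift (fun t => H 2 t) (fun _ => Complex.arg (Φ ((a+b)/2, 0))) := by
      refine ⟨continuous_const, ?_⟩
      intro t ht
      simp only [hconst2 t]
      exact (Complex.norm_mul_exp_arg_mul_I _).symm
    rw [hwlift 2 _ hcl]
    ring
  have hw0 : w 0 = 0 := by
    rw [← hw2]
    exact hlocconst.apply_eq_of_isPreconnected isPreconnected_univ (mem_univ 0) (mem_univ 2)
  -- the boundary loop itself
  set δ : ℝ → ℂ := fun t => H 0 t with hδdef
  have hδγ : ∀ t, δ t = Φ (γ t) := by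
    intro t
    have hcs0 : cs 0 = 0 := by
      rw [hcs]
      simp only
      rw [min_eq_left zero_le_one, max_eq_left le_rfl]
    rw [hδdef]
    simp only [hpt, hcs0, hH]
    norm_num
  have hδ0 : ∀ t, δ t ≠ 0 := hH0 0
  -- sign facts common to both orientation cases
  have hbot : ∀ t : ℝ, t ≤ 1/4 → (δ t).re = 0 → 0 < (δ t).im := by
    intro t ht hre
    rw [hδγ] at hre ⊢
    rw [hΦre] at hre
    rw [hΦim]
    have hx : (G (γ t)).1 = (γ t).1 := by linarith
    have hmem := hImg (γ t) (hγmem t)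
    obtain ⟨hin, hout⟩ := hmem
    have hxIcc : (G (γ t)).1 ∈ Icc a b := by
      rw [hx]
      exact (hγmem t).1
    have hGN : G (γ t) ∈ HSet a b r := by
      rcases hin with (h | h) | h
      · exact absurd h.1 (by simp only [mem_Iio]; push_neg; exact hxIcc.1)
      · exact h
      · exact absurd h.1 (by simp only [mem_Ioi]; push_neg; exact hxIcc.2)
    have hy2 : (G (γ t)).2 ∉ ({-r, r} : Set ℝ) := by
      intro hy
      exact hout ⟨hxIcc, hy⟩
    simp only [mem_insert_iff, mem_singleton_iff] at hy2
    push_neg at hy2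
    have hy3 : -r ≤ (G (γ t)).2 := hGN.2.1
    have hy4 : -r < (G (γ t)).2 := lt_of_le_of_ne hy3 (Ne.symm hy2.1)
    rw [hγ_bot t ht]
    linarith
  have htop : ∀ t : ℝ, 1/2 ≤ t → t ≤ 3/4 → (δ t).re = 0 → (δ t).im < 0 := by
    intro t ht1 ht2 hre
    rw [hδγ] at hre ⊢
    rw [hΦre] at hre
    rw [hΦim]
    have hx : (G (γ t)).1 = (γ t).1 := by linarith
    have hmem := hImg (γ t) (hγmem t)
    obtain ⟨hin, hout⟩ := hmem
    have hxIcc : (G (γ t)).1 ∈ Icc a b := by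
      rw [hx]
      exact (hγmem t).1
    have hGN : G (γ t) ∈ HSet a b r := by
      rcases hin with (h | h) | h
      · exact absurd h.1 (by simp only [mem_Iio]; push_neg; exact hxIcc.1)
      · exact h
      · exact absurd h.1 (by simp only [mem_Ioi]; push_neg; exact hxIcc.2)
    have hy2 : (G (γ t)).2 ∉ ({-r, r} : Set ℝ) := by
      intro hy
      exact hout ⟨hxIcc, hy⟩
    simp only [mem_insert_iff, mem_singleton_iff] at hy2
    push_neg at hy2
    have hy3 : (G (γ t)).2 ≤ r := hGN.2.2
    have hy4 : (G (γ t)).2 < r := lt_of_le_of_ne hy3 hy2.2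
    rw [hγ_top t ht1 ht2]
    linarith
  -- avoid-set lemmas parametrized over lifts of δ
  have habs : ∀ t, 0 < ‖δ t‖ := fun t => norm_pos_iff.mpr (hδ0 t)
  have havoid_bot : ∀ θn : ℝ → ℝ, IsLift δ θn → ∀ t ∈ Icc (0:ℝ) (1/4), ∀ k : ℤ,
      θn t ≠ -(Real.pi/2) + k * (2*Real.pi) := by
    intro θn hθn t ht k heq
    have hri := lift_re_im hθn (⟨ht.1, by linarith [ht.2]⟩ : t ∈ Icc (0:ℝ) 1)
    have hcos : Real.cos (θn t) = 0 := by
      rw [heq]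
      apply Real.cos_eq_zero_iff.2 ⟨2*k - 1, by push_cast; ring⟩
    have hsin : Real.sin (θn t) = -1 := by
      rw [heq, show -(Real.pi/2) + (k:ℝ) * (2*Real.pi) = -(Real.pi/2) + (k:ℤ) * (2*Real.pi)
        by push_cast; ring, Real.sin_add_int_mul_two_pi, Real.sin_neg, Real.sin_pi_div_two]
    have hre0 : (δ t).re = 0 := by rw [hri.1, hcos, mul_zero]
    have him := hbot t ht.2 hre0
    rw [hri.2, hsin] at him
    nlinarith [habs t]
  have havoid_top : ∀ θn : ℝ → ℝ, IsLift δ θn → ∀ t ∈ Icc (1/2:ℝ) (3/4), ∀ k : ℤ,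
      θn t ≠ Real.pi/2 + k * (2*Real.pi) := by
    intro θn hθn t ht k heq
    have hri := lift_re_im hθn (⟨by linarith [ht.1], by linarith [ht.2]⟩ : t ∈ Icc (0:ℝ) 1)
    have hcos : Real.cos (θn t) = 0 := by
      rw [heq]
      apply Real.cos_eq_zero_iff.2 ⟨2*k, by push_cast; ring⟩
    have hsin : Real.sin (θn t) = 1 := by
      rw [heq, show Real.pi/2 + (k:ℝ) * (2*Real.pi) = Real.pi/2 + (k:ℤ) * (2*Real.pi)
        by push_cast; ring, Real.sin_add_int_mul_two_pi, Real.sin_pi_div_two]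
    have hre0 : (δ t).re = 0 := by rw [hri.1, hcos, mul_zero]
    have him := htop t ht.1 ht.2 hre0
    rw [hri.2, hsin] at him
    nlinarith [habs t]
  have havoid_cos : ∀ θn : ℝ → ℝ, IsLift δ θn → ∀ t ∈ Icc (0:ℝ) 1, (δ t).re ≠ 0 → ∀ k : ℤ,
      θn t ≠ Real.pi/2 + k * Real.pi := by
    intro θn hθn t ht hre k heq
    have hri := lift_re_im hθn ht
    have hcos : Real.cos (θn t) = 0 := by
      rw [heq]
      apply Real.cos_eq_zero_iff.2 ⟨k, by push_cast; ring⟩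
    apply hre
    rw [hri.1, hcos, mul_zero]
  -- cos sign from re sign
  have hcos_sign : ∀ θn : ℝ → ℝ, IsLift δ θn → ∀ t ∈ Icc (0:ℝ) 1,
      (0 < (δ t).re → 0 < Real.cos (θn t)) ∧ ((δ t).re < 0 → Real.cos (θn t) < 0) := by
    intro θn hθn t ht
    have hri := lift_re_im hθn ht
    constructor
    · intro h
      nlinarith [habs t, hri.1]
    · intro h
      nlinarith [habs t, hri.1]
  -- the base lift with zero winding
  obtain ⟨θ, hθ⟩ := hex 0
  have hθδ : IsLift δ θ := hθ
  have hθd : θ 1 - θ 0 = 0 := by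
    rw [← hwlift 0 θ hθ]
    exact hw0
  -- normalization data
  set m0 : ℤ := round (θ (1/4) / (2*Real.pi)) with hm0
  have hround : |θ (1/4) - m0 * (2*Real.pi)| ≤ Real.pi := by
    have h1 := abs_sub_round (θ (1/4) / (2*Real.pi))
    rw [← hm0] at h1
    rw [abs_le] at h1 ⊢
    have h2π : (0:ℝ) < 2*Real.pi := by linarith
    have hup : (θ (1/4) / (2*Real.pi) - m0) * (2*Real.pi) ≤ (1/2) * (2*Real.pi) :=
      mul_le_mul_of_nonneg_right h1.2 (by linarith)
    have hlo : (-(1/2) : ℝ) * (2*Real.pi) ≤ (θ (1/4) / (2*Real.pi) - m0) * (2*Real.pi) :=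
      mul_le_mul_of_nonneg_right h1.1 (by linarith)
    rw [sub_mul, div_mul_cancel₀ _ (ne_of_gt h2π)] at hup hlo
    constructor
    · linarith
    · linarith
  have h14mem : (1/4 : ℝ) ∈ Icc (0:ℝ) 1 := by norm_num
  have h12mem : (1/2 : ℝ) ∈ Icc (0:ℝ) 1 := by norm_num
  have h34mem : (3/4 : ℝ) ∈ Icc (0:ℝ) 1 := by norm_num
  have h1mem : (1 : ℝ) ∈ Icc (0:ℝ) 1 := by norm_num
  have h0mem : (0 : ℝ) ∈ Icc (0:ℝ) 1 := by norm_num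
  rcases hcov.2 with ⟨hL, hR⟩ | ⟨hL, hR⟩
  · -- same-orientation case
    have hre_right : ∀ t : ℝ, 1/4 ≤ t → t ≤ 1/2 → 0 < (δ t).re := by
      intro t h1 h2
      have hmem := hγ_right t h1 h2
      have hGr : G (γ t) ∈ RightSide b := hR ⟨γ t, hmem, rfl⟩
      rw [hδγ, hΦre]
      have hb : (γ t).1 = b := hmem.1
      have : b < (G (γ t)).1 := hGr.1
      linarith
    have hre_left : ∀ t : ℝ, γ t ∈ LeftEdge a r → (δ t).re < 0 := by
      intro t hmem
      have hGl : G (γ t) ∈ LeftSide a := hL ⟨γ t, hmem, rfl⟩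
      rw [hδγ, hΦre]
      have ha : (γ t).1 = a := hmem.1
      have : (G (γ t)).1 < a := hGl.1
      linarith
    -- normalized lift
    set θn : ℝ → ℝ := fun t => θ t - m0 * (2*Real.pi) with hθn
    have hθnl : IsLift δ θn := hθδ.shift m0
    have hθnc : Continuous θn := hθnl.1
    have hθnd : θn 1 - θn 0 = 0 := by
      rw [hθn]
      simp only
      linarith
    have hcos14 : 0 < Real.cos (θn (1/4)) :=
      (hcos_sign θn hθnl _ h14mem).1 (hre_right _ le_rfl (by norm_num))
    have hn14 : θn (1/4) ∈ Ioo (-(Real.pi/2)) (Real.pi/2) := by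
      rw [abs_le] at hround
      constructor
      · by_contra hle
        push_neg at hle
        have h1 : Real.cos (θn (1/4)) = Real.cos (-(θn (1/4))) := (Real.cos_neg _).symm
        have h2 : Real.cos (-(θn (1/4))) ≤ 0 := by
          apply Real.cos_nonpos_of_pi_div_two_le_of_le (by linarith)
          rw [hθn]; simp only; linarith [hround.1]
        linarith
      · by_contra hle
        push_neg at hle
        have h2 : Real.cos (θn (1/4)) ≤ 0 := by
          apply Real.cos_nonpos_of_pi_div_two_le_of_le hle
          rw [hθn]; simp only; linarith [hround.2]
        linarith
    -- stay chain
    have hstay1 : θn (1/2) ∈ Ioo (Real.pi/2 + (-1:ℤ)*Real.pi) (Real.pi/2 + ((-1:ℤ)+1)*Real.pi) := by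
      refine stay_in_component hθnc (u := 1/4) (v := 1/2) ?_ (t₀ := 1/4) (by norm_num) ?_ _
        (by norm_num)
      · intro s hs k
        exact havoid_cos θn hθnl s ⟨by linarith [hs.1], by linarith [hs.2]⟩
          (ne_of_gt (hre_right s hs.1 hs.2)) k
      · push_cast
        constructor
        · linarith [hn14.1]
        · linarith [hn14.2]
    have hstay2 : θn (3/4) ∈ Ioo (Real.pi/2 + (-1:ℤ)*(2*Real.pi))
        (Real.pi/2 + ((-1:ℤ)+1)*(2*Real.pi)) := by
      refine stay_in_component hθnc (u := 1/2) (v := 3/4) ?_ (t₀ := 1/2) (by norm_num) ?_ _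
        (by norm_num)
      · intro s hs k
        exact havoid_top θn hθnl s hs k
      · push_cast
        push_cast at hstay1
        constructor
        · linarith [hstay1.1]
        · linarith [hstay1.2]
    have hcos34 : Real.cos (θn (3/4)) < 0 :=
      (hcos_sign θn hθnl _ h34mem).2 (hre_left _ (hγ_left _ le_rfl))
    have hn34 : θn (3/4) < -(Real.pi/2) := by
      by_contra hle
      push_neg at hle
      push_cast at hstay2
      have : 0 ≤ Real.cos (θn (3/4)) := by
        apply Real.cos_nonneg_of_mem_Icc
        constructor
        · exact hle
        · linarith [hstay2.2]
      linarith
    have hstay3 : θn 1 ∈ Ioo (Real.pi/2 + (-2:ℤ)*Real.pi) (Real.pi/2 + ((-2:ℤ)+1)*Real.pi) := by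
      refine stay_in_component hθnc (u := 3/4) (v := 1) ?_ (t₀ := 3/4) (by norm_num) ?_ _
        (by norm_num)
      · intro s hs k
        exact havoid_cos θn hθnl s ⟨by linarith [hs.1], hs.2⟩
          (ne_of_lt (hre_left _ (hγ_left _ hs.1))) k
      · push_cast
        push_cast at hstay2
        constructor
        · linarith [hstay2.1]
        · linarith [hn34]
    have hstay4 : θn 0 ∈ Ioo (-(Real.pi/2) + (0:ℤ)*(2*Real.pi))
        (-(Real.pi/2) + ((0:ℤ)+1)*(2*Real.pi)) := by
      refine stay_in_component hθnc (u := 0) (v := 1/4) ?_ (t₀ := 1/4) (by norm_num) ?_ _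
        (by norm_num)
      · intro s hs k
        exact havoid_bot θn hθnl s hs k
      · push_cast
        constructor
        · linarith [hn14.1]
        · linarith [hn14.2]
    have hcos0 : Real.cos (θn 0) < 0 :=
      (hcos_sign θn hθnl _ h0mem).2 (hre_left _ hγ_0left)
    have hn0 : Real.pi/2 < θn 0 := by
      by_contra hle
      push_neg at hle
      push_cast at hstay4
      have : 0 ≤ Real.cos (θn 0) := by
        apply Real.cos_nonneg_of_mem_Icc
        constructor
        · linarith [hstay4.1]
        · exact hle
      linarith
    push_cast at hstay3
    have : θn 1 = θn 0 := by linarith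
    linarith [hstay3.2]
  · -- flipped-orientation case
    have hre_right : ∀ t : ℝ, 1/4 ≤ t → t ≤ 1/2 → (δ t).re < 0 := by
      intro t h1 h2
      have hmem := hγ_right t h1 h2
      have hGr : G (γ t) ∈ LeftSide a := hR ⟨γ t, hmem, rfl⟩
      rw [hδγ, hΦre]
      have hb : (γ t).1 = b := hmem.1
      have : (G (γ t)).1 < a := hGr.1
      linarith
    have hre_left : ∀ t : ℝ, γ t ∈ LeftEdge a r → 0 < (δ t).re := by
      intro t hmem
      have hGl : G (γ t) ∈ RightSide b := hL ⟨γ t, hmem, rfl⟩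
      rw [hδγ, hΦre]
      have ha : (γ t).1 = a := hmem.1
      have : b < (G (γ t)).1 := hGl.1
      linarith
    -- normalized lift: θn (1/4) ∈ (π/2, 3π/2)
    have hθa := hθδ.shift m0
    have hcosa : Real.cos (θ (1/4) - m0*(2*Real.pi)) < 0 :=
      (hcos_sign _ hθa _ h14mem).2 (hre_right _ le_rfl (by norm_num))
    rw [abs_le] at hround
    have hcase : ∃ m1 : ℤ, θ (1/4) - m1 * (2*Real.pi) ∈ Ioo (Real.pi/2) (Real.pi/2 + Real.pi) := by
      rcases lt_or_ge (θ (1/4) - m0*(2*Real.pi)) 0 with hneg | hpos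
      · refine ⟨m0 - 1, ?_⟩
        have hlt : θ (1/4) - m0*(2*Real.pi) < -(Real.pi/2) := by
          by_contra hge
          push_neg at hge
          have : 0 ≤ Real.cos (θ (1/4) - m0*(2*Real.pi)) :=
            Real.cos_nonneg_of_mem_Icc ⟨hge, by linarith⟩
          linarith
        constructor
        · push_cast
          linarith [hround.1]
        · push_cast
          linarith [hlt]
      · refine ⟨m0, ?_⟩
        have hgt : Real.pi/2 < θ (1/4) - m0*(2*Real.pi) := by
          by_contra hge
          push_neg at hge
          have : 0 ≤ Real.cos (θ (1/4) - m0*(2*Real.pi)) :=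
            Real.cos_nonneg_of_mem_Icc ⟨by linarith, hge⟩
          linarith
        exact ⟨hgt, by linarith [hround.2]⟩
    obtain ⟨m1, hm1⟩ := hcase
    set θn : ℝ → ℝ := fun t => θ t - m1 * (2*Real.pi) with hθn
    have hθnl : IsLift δ θn := hθδ.shift m1
    have hθnc : Continuous θn := hθnl.1
    have hθnd : θn 1 - θn 0 = 0 := by
      rw [hθn]
      simp only
      linarith
    have hn14 : θn (1/4) ∈ Ioo (Real.pi/2) (Real.pi/2 + Real.pi) := hm1
    -- stay chain
    have hstay1 : θn (1/2) ∈ Ioo (Real.pi/2 + (0:ℤ)*Real.pi) (Real.pi/2 + ((0:ℤ)+1)*Real.pi) := by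
      refine stay_in_component hθnc (u := 1/4) (v := 1/2) ?_ (t₀ := 1/4) (by norm_num) ?_ _
        (by norm_num)
      · intro s hs k
        exact havoid_cos θn hθnl s ⟨by linarith [hs.1], by linarith [hs.2]⟩
          (ne_of_lt (hre_right s hs.1 hs.2)) k
      · push_cast
        exact ⟨by linarith [hn14.1], by linarith [hn14.2]⟩
    have hstay2 : θn (3/4) ∈ Ioo (Real.pi/2 + (0:ℤ)*(2*Real.pi))
        (Real.pi/2 + ((0:ℤ)+1)*(2*Real.pi)) := by
      refine stay_in_component hθnc (u := 1/2) (v := 3/4) ?_ (t₀ := 1/2) (by norm_num) ?_ _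
        (by norm_num)
      · intro s hs k
        exact havoid_top θn hθnl s hs k
      · push_cast
        push_cast at hstay1
        exact ⟨by linarith [hstay1.1], by linarith [hstay1.2]⟩
    have hcos34 : 0 < Real.cos (θn (3/4)) :=
      (hcos_sign θn hθnl _ h34mem).1 (hre_left _ (hγ_left _ le_rfl))
    have hn34 : Real.pi + Real.pi/2 < θn (3/4) := by
      by_contra hle
      push_neg at hle
      push_cast at hstay2
      have : Real.cos (θn (3/4)) ≤ 0 := by
        apply Real.cos_nonpos_of_pi_div_two_le_of_le
        · linarith [hstay2.1]
        · linarith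
      linarith
    have hstay3 : θn 1 ∈ Ioo (Real.pi/2 + (1:ℤ)*Real.pi) (Real.pi/2 + ((1:ℤ)+1)*Real.pi) := by
      refine stay_in_component hθnc (u := 3/4) (v := 1) ?_ (t₀ := 3/4) (by norm_num) ?_ _
        (by norm_num)
      · intro s hs k
        exact havoid_cos θn hθnl s ⟨by linarith [hs.1], hs.2⟩
          (ne_of_gt (hre_left _ (hγ_left _ hs.1))) k
      · push_cast
        push_cast at hstay2
        exact ⟨by linarith [hn34], by linarith [hstay2.2]⟩
    have hstay4 : θn 0 ∈ Ioo (-(Real.pi/2) + (0:ℤ)*(2*Real.pi))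
        (-(Real.pi/2) + ((0:ℤ)+1)*(2*Real.pi)) := by
      refine stay_in_component hθnc (u := 0) (v := 1/4) ?_ (t₀ := 1/4) (by norm_num) ?_ _
        (by norm_num)
      · intro s hs k
        exact havoid_bot θn hθnl s hs k
      · push_cast
        exact ⟨by linarith [hn14.1], by linarith [hn14.2]⟩
    have hcos0 : 0 < Real.cos (θn 0) :=
      (hcos_sign θn hθnl _ h0mem).1 (hre_left _ hγ_0left)
    have hn0 : θn 0 < Real.pi/2 := by
      by_contra hle
      push_neg at hle
      push_cast at hstay4
      have : Real.cos (θn 0) ≤ 0 := by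
        apply Real.cos_nonpos_of_pi_div_two_le_of_le hle
        linarith [hstay4.2]
      linarith
    push_cast at hstay3
    have : θn 1 = θn 0 := by linarith
    linarith [hstay3.1]


end key

section reduction

/-- Clamping to an interval. -/
noncomputable def clampR (lo hi x : ℝ) : ℝ := max lo (min x hi)

lemma clampR_cont (lo hi : ℝ) : Continuous (clampR lo hi) := by
  unfold clampR
  fun_prop

lemma clampR_mem {lo hi : ℝ} (h : lo ≤ hi) (x : ℝ) : clampR lo hi x ∈ Icc lo hi :=
  ⟨le_max_left _ _, max_le h (min_le_right _ _)⟩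

lemma clampR_eq_self {lo hi x : ℝ} (hx : x ∈ Icc lo hi) : clampR lo hi x = x := by
  unfold clampR
  rw [min_eq_left hx.2, max_eq_right hx.1]

lemma clampR_lt {lo hi x : ℝ} (h : lo ≤ hi) (hx : x < lo) : clampR lo hi x = lo := by
  unfold clampR
  rcases le_or_gt x hi with h1 | h1
  · rw [min_eq_left h1, max_eq_left hx.le]
  · exact absurd h (not_le.2 (h1.trans hx))

lemma clampR_gt {lo hi x : ℝ} (h : lo ≤ hi) (hx : hi < x) : clampR lo hi x = hi := by
  unfold clampR
  rw [min_eq_right hx.le, max_eq_right h]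

/-- Clamping to an h-set. -/
noncomputable def clamp2 (a b r : ℝ) (p : ℝ × ℝ) : ℝ × ℝ :=
  (clampR a b p.1, clampR (-r) r p.2)

lemma clamp2_cont (a b r : ℝ) : Continuous (clamp2 a b r) := by
  unfold clamp2
  exact ((clampR_cont a b).comp continuous_fst).prodMk ((clampR_cont (-r) r).comp continuous_snd)

lemma clamp2_mem {a b r : ℝ} (hab : a ≤ b) (hr : 0 < r) (p : ℝ × ℝ) :
    clamp2 a b r p ∈ HSet a b r :=
  ⟨clampR_mem hab _, clampR_mem (by linarith) _⟩

lemma clamp2_eq_self {a b r : ℝ} (p : ℝ × ℝ) (hp : p ∈ HSet a b r) : clamp2 a b r p = p :=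
  Prod.ext_iff.2 ⟨clampR_eq_self hp.1, clampR_eq_self hp.2⟩

lemma clamp2_left {a b r : ℝ} (hab : a ≤ b) (hr : 0 < r) {p : ℝ × ℝ} (hp : p ∈ LeftSide a) :
    clamp2 a b r p ∈ LeftEdge a r := by
  refine ⟨?_, clampR_mem (by linarith) _⟩
  have : p.1 < a := hp.1
  exact clampR_lt hab this

lemma clamp2_right {a b r : ℝ} (hab : a ≤ b) (hr : 0 < r) {p : ℝ × ℝ} (hp : p ∈ RightSide b) :
    clamp2 a b r p ∈ RightEdge b r := by
  refine ⟨?_, clampR_mem (by linarith) _⟩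
  have : b < p.1 := hp.1
  exact clampR_gt hab this

lemma leftEdge_subset {a b r : ℝ} (hab : a ≤ b) : LeftEdge a r ⊆ HSet a b r := by
  rintro ⟨x, y⟩ ⟨hx, hy⟩
  have : x = a := hx
  exact ⟨⟨le_of_eq this.symm, this ▸ hab⟩, hy⟩

lemma rightEdge_subset {a b r : ℝ} (hab : a ≤ b) : RightEdge b r ⊆ HSet a b r := by
  rintro ⟨x, y⟩ ⟨hx, hy⟩
  have : x = b := hx
  exact ⟨⟨this ▸ hab, le_of_eq this⟩, hy⟩

end reduction

open Fin.NatCast in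
set_option maxHeartbeats 1000000 in
/-- A loop of `n` horizontal covering relations between h-sets
`N j = [a j, b j] × [-r,r]` yields `x ∈ int N₀` with `fⁿ(x) = x` whose orbit
follows the loop through the interiors. -/
theorem stmt_7 (f : ℝ × ℝ → ℝ × ℝ) (hf : Continuous f)
    (n : ℕ) [NeZero n] (a b : Fin n → ℝ) (r : ℝ) (hr : 0 < r)
    (hab : ∀ j, a j ≤ b j)
    (hcov : ∀ j : Fin n, CoversH f (a j) (b j) (a (j + 1)) (b (j + 1)) r) :
    ∃ x ∈ interior (HSet (a 0) (b 0) r), f^[n] x = x ∧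
      ∀ j : Fin n, f^[(j : ℕ)] x ∈ interior (HSet (a j) (b j) r) := by
  classical
  have hn0 : 0 < n := Nat.pos_of_ne_zero (NeZero.ne n)
  have hcast : ∀ k : ℕ, ((k+1 : ℕ) : Fin n) = (k : Fin n) + 1 := by
    intro k
    push_cast
    ring
  -- the clamped iteration
  set Pit : ℕ → (ℝ × ℝ → ℝ × ℝ) := fun k =>
    Nat.rec (motive := fun _ => ℝ × ℝ → ℝ × ℝ) id
      (fun j Pj => fun x => f (clamp2 (a (j : Fin n)) (b (j : Fin n)) r (Pj x))) k with hPit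
  have hPit0 : ∀ x, Pit 0 x = x := fun _ => rfl
  have hPitS : ∀ k x, Pit (k+1) x = f (clamp2 (a (k : Fin n)) (b (k : Fin n)) r (Pit k x)) :=
    fun _ _ => rfl
  have hPitc : ∀ k, Continuous (Pit k) := by
    intro k
    induction k with
    | zero => exact continuous_id
    | succ k ih =>
      have : Pit (k+1) = f ∘ clamp2 (a (k : Fin n)) (b (k : Fin n)) r ∘ Pit k := rfl
      rw [this]
      exact hf.comp ((clamp2_cont _ _ _).comp ih)
  -- basic image fact
  have hstep : ∀ (k : ℕ) (x : ℝ × ℝ), Pit (k+1) x ∈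
      (LeftSide (a ((k+1 : ℕ) : Fin n)) ∪ HSet (a ((k+1:ℕ) : Fin n)) (b ((k+1:ℕ) : Fin n)) r ∪
        RightSide (b ((k+1:ℕ) : Fin n))) \ HorizBdry (a ((k+1:ℕ):Fin n)) (b ((k+1:ℕ):Fin n)) r := by
    intro k x
    rw [hcast k, hPitS k x]
    exact (hcov (k : Fin n)).1 ⟨_, clamp2_mem (hab _) hr _, rfl⟩
  -- orientation invariant along the chain
  have hQ : ∀ k : ℕ, 1 ≤ k →
      ((∀ x ∈ LeftEdge (a 0) r, Pit k x ∈ LeftSide (a (k : Fin n))) ∧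
        (∀ x ∈ RightEdge (b 0) r, Pit k x ∈ RightSide (b (k : Fin n)))) ∨
      ((∀ x ∈ LeftEdge (a 0) r, Pit k x ∈ RightSide (b (k : Fin n))) ∧
        (∀ x ∈ RightEdge (b 0) r, Pit k x ∈ LeftSide (a (k : Fin n)))) := by
    intro k hk
    induction k with
    | zero => omega
    | succ k ih =>
      rcases Nat.eq_zero_or_pos k with rfl | hkpos
      · -- base case k+1 = 1
        have h1 : ∀ x ∈ HSet (a 0) (b 0) r, Pit (0+1) x = f x := by
          intro x hx
          have he : Pit (0+1) x = f (clamp2 (a ((0:ℕ) : Fin n)) (b ((0:ℕ) : Fin n)) r x) :=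
            hPitS 0 x
          rw [he, Nat.cast_zero, clamp2_eq_self x hx]
        rw [show ((0+1 : ℕ) : Fin n) = (0 : Fin n) + 1 from hcast 0]
        rw [Nat.cast_zero] at *
        rcases (hcov 0).2 with ⟨hL, hR⟩ | ⟨hL, hR⟩
        · left
          constructor
          · intro x hx
            rw [h1 x (leftEdge_subset (hab 0) hx)]
            exact hL ⟨x, hx, rfl⟩
          · intro x hx
            rw [h1 x (rightEdge_subset (hab 0) hx)]
            exact hR ⟨x, hx, rfl⟩
        · right
          constructor
          · intro x hx
            rw [h1 x (leftEdge_subset (hab 0) hx)]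
            exact hL ⟨x, hx, rfl⟩
          · intro x hx
            rw [h1 x (rightEdge_subset (hab 0) hx)]
            exact hR ⟨x, hx, rfl⟩
      · have ih' := ih hkpos
        rw [hcast k]
        have hLstep : ∀ x, Pit k x ∈ LeftSide (a (k : Fin n)) →
            (Pit (k+1) x ∈ LeftSide (a ((k:Fin n)+1)) ∧
              f '' LeftEdge (a (k:Fin n)) r ⊆ LeftSide (a ((k:Fin n)+1))) ∨
            (Pit (k+1) x ∈ RightSide (b ((k:Fin n)+1)) ∧
              f '' LeftEdge (a (k:Fin n)) r ⊆ RightSide (b ((k:Fin n)+1))) := by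
          intro x hx
          have hcl : clamp2 (a (k:Fin n)) (b (k:Fin n)) r (Pit k x) ∈ LeftEdge (a (k:Fin n)) r :=
            clamp2_left (hab _) hr hx
          rcases (hcov (k:Fin n)).2 with ⟨hL, hR⟩ | ⟨hL, hR⟩
          · left
            exact ⟨by rw [hPitS k x]; exact hL ⟨_, hcl, rfl⟩, hL⟩
          · right
            exact ⟨by rw [hPitS k x]; exact hL ⟨_, hcl, rfl⟩, hL⟩
        have hRstep : ∀ x, Pit k x ∈ RightSide (b (k : Fin n)) →
            (Pit (k+1) x ∈ LeftSide (a ((k:Fin n)+1)) ∧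
              f '' RightEdge (b (k:Fin n)) r ⊆ LeftSide (a ((k:Fin n)+1))) ∨
            (Pit (k+1) x ∈ RightSide (b ((k:Fin n)+1)) ∧
              f '' RightEdge (b (k:Fin n)) r ⊆ RightSide (b ((k:Fin n)+1))) := by
          intro x hx
          have hcl : clamp2 (a (k:Fin n)) (b (k:Fin n)) r (Pit k x) ∈ RightEdge (b (k:Fin n)) r :=
            clamp2_right (hab _) hr hx
          rcases (hcov (k:Fin n)).2 with ⟨hL, hR⟩ | ⟨hL, hR⟩
          · right
            exact ⟨by rw [hPitS k x]; exact hR ⟨_, hcl, rfl⟩, hR⟩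
          · left
            exact ⟨by rw [hPitS k x]; exact hR ⟨_, hcl, rfl⟩, hR⟩
        rcases ih' with ⟨hQL, hQR⟩ | ⟨hQL, hQR⟩
        · rcases (hcov (k:Fin n)).2 with ⟨hL, hR⟩ | ⟨hL, hR⟩
          · left
            constructor
            · intro x hx
              rw [hPitS k x]
              exact hL ⟨_, clamp2_left (hab _) hr (hQL x hx), rfl⟩
            · intro x hx
              rw [hPitS k x]
              exact hR ⟨_, clamp2_right (hab _) hr (hQR x hx), rfl⟩
          · right
            constructor
            · intro x hx
              rw [hPitS k x]
              exact hL ⟨_, clamp2_left (hab _) hr (hQL x hx), rfl⟩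
            · intro x hx
              rw [hPitS k x]
              exact hR ⟨_, clamp2_right (hab _) hr (hQR x hx), rfl⟩
        · rcases (hcov (k:Fin n)).2 with ⟨hL, hR⟩ | ⟨hL, hR⟩
          · right
            constructor
            · intro x hx
              rw [hPitS k x]
              exact hR ⟨_, clamp2_right (hab _) hr (hQL x hx), rfl⟩
            · intro x hx
              rw [hPitS k x]
              exact hL ⟨_, clamp2_left (hab _) hr (hQR x hx), rfl⟩
          · left
            constructor
            · intro x hx
              rw [hPitS k x]
              exact hR ⟨_, clamp2_right (hab _) hr (hQL x hx), rfl⟩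
            · intro x hx
              rw [hPitS k x]
              exact hL ⟨_, clamp2_left (hab _) hr (hQR x hx), rfl⟩
  -- the composed map covers N₀
  have hnFin : ((n : ℕ) : Fin n) = 0 := by
    exact_mod_cast Fin.natCast_self n
  have hcovF : CoversH (Pit n) (a 0) (b 0) (a 0) (b 0) r := by
    constructor
    · rintro y ⟨x, hx, rfl⟩
      obtain ⟨m, rfl⟩ := Nat.exists_eq_succ_of_ne_zero (NeZero.ne n)
      have := hstep m x
      rwa [hnFin] at this
    · have := hQ n (by omega)
      rw [hnFin] at this
      rcases this with ⟨h1, h2⟩ | ⟨h1, h2⟩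
      · left
        exact ⟨by rintro y ⟨x, hx, rfl⟩; exact h1 x hx, by rintro y ⟨x, hx, rfl⟩; exact h2 x hx⟩
      · right
        exact ⟨by rintro y ⟨x, hx, rfl⟩; exact h1 x hx, by rintro y ⟨x, hx, rfl⟩; exact h2 x hx⟩
  obtain ⟨x₀, hx₀, hfx₀⟩ := covers_fixed_point (hPitc n) hr (hab 0) hcovF
  -- nothing along the orbit ever leaves
  have hBad : ∀ j : ℕ, j ≤ n →
      Pit j x₀ ∈ LeftSide (a (j : Fin n)) ∪ RightSide (b (j : Fin n)) → False := by
    intro j hj hbad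
    have hprop : ∀ i : ℕ, j ≤ i → i ≤ n →
        Pit i x₀ ∈ LeftSide (a (i : Fin n)) ∪ RightSide (b (i : Fin n)) := by
      intro i hji hin
      induction i, hji using Nat.le_induction with
      | base => exact hbad
      | succ i hji ih =>
        have hbi := ih (by omega)
        rw [hcast i]
        rcases hbi with h | h
        · have hcl := clamp2_left (hab (i : Fin n)) hr h
          rcases (hcov (i : Fin n)).2 with ⟨hL, _⟩ | ⟨hL, _⟩
          · left
            rw [hPitS i x₀]
            exact hL ⟨_, hcl, rfl⟩
          · right
            rw [hPitS i x₀]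
            exact hL ⟨_, hcl, rfl⟩
        · have hcl := clamp2_right (hab (i : Fin n)) hr h
          rcases (hcov (i : Fin n)).2 with ⟨_, hR⟩ | ⟨_, hR⟩
          · right
            rw [hPitS i x₀]
            exact hR ⟨_, hcl, rfl⟩
          · left
            rw [hPitS i x₀]
            exact hR ⟨_, hcl, rfl⟩
    have hn := hprop n hj le_rfl
    rw [hnFin, hfx₀] at hn
    rcases hn with h | h
    · exact absurd hx₀.1.1 (by simpa using not_le.2 h.1)
    · exact absurd hx₀.1.2 (by simpa using not_le.2 h.1)
  have hGood : ∀ j : ℕ, j ≤ n → Pit j x₀ ∈ HSet (a (j : Fin n)) (b (j : Fin n)) r := by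
    intro j hj
    rcases Nat.eq_zero_or_pos j with rfl | hjpos
    · rw [Nat.cast_zero, hPit0]
      exact hx₀
    · obtain ⟨m, rfl⟩ := Nat.exists_eq_succ_of_ne_zero (Nat.pos_iff_ne_zero.1 hjpos)
      have := (hstep m x₀).1
      rcases this with (h | h) | h
      · exact absurd (Or.inl h) (hBad _ hj)
      · exact h
      · exact absurd (Or.inr h) (hBad _ hj)
  have hIter : ∀ j : ℕ, j ≤ n → Pit j x₀ = f^[j] x₀ := by
    intro j hj
    induction j with
    | zero => rfl
    | succ j ih =>
      rw [hPitS j x₀, clamp2_eq_self _ (hGood j (by omega)), ih (by omega),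
        Function.iterate_succ_apply']
  have hNoHoriz : ∀ j : ℕ, 1 ≤ j → j ≤ n →
      Pit j x₀ ∉ HorizBdry (a (j : Fin n)) (b (j : Fin n)) r := by
    intro j h1 h2
    obtain ⟨m, rfl⟩ := Nat.exists_eq_succ_of_ne_zero (by omega : j ≠ 0)
    exact (hstep m x₀).2
  have hNotEdge : ∀ j : ℕ, j < n →
      (Pit j x₀).1 ≠ a (j : Fin n) ∧ (Pit j x₀).1 ≠ b (j : Fin n) := by
    intro j hj
    have hGj := hGood j hj.le
    constructor
    · intro heq
      have hedge : Pit j x₀ ∈ LeftEdge (a (j : Fin n)) r := ⟨heq, hGj.2⟩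
      have hb : Pit (j+1) x₀ ∈ LeftSide (a ((j:Fin n)+1)) ∪ RightSide (b ((j:Fin n)+1)) := by
        rw [hPitS j x₀, clamp2_eq_self _ hGj]
        rcases (hcov (j : Fin n)).2 with ⟨hL, _⟩ | ⟨hL, _⟩
        · exact Or.inl (hL ⟨_, hedge, rfl⟩)
        · exact Or.inr (hL ⟨_, hedge, rfl⟩)
      rw [← hcast j] at hb
      exact hBad (j+1) (by omega) hb
    · intro heq
      have hedge : Pit j x₀ ∈ RightEdge (b (j : Fin n)) r := ⟨heq, hGj.2⟩
      have hb : Pit (j+1) x₀ ∈ LeftSide (a ((j:Fin n)+1)) ∪ RightSide (b ((j:Fin n)+1)) := by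
        rw [hPitS j x₀, clamp2_eq_self _ hGj]
        rcases (hcov (j : Fin n)).2 with ⟨_, hR⟩ | ⟨_, hR⟩
        · exact Or.inr (hR ⟨_, hedge, rfl⟩)
        · exact Or.inl (hR ⟨_, hedge, rfl⟩)
      rw [← hcast j] at hb
      exact hBad (j+1) (by omega) hb
  have hNotHorizY : ∀ j : ℕ, j < n → -r < (Pit j x₀).2 ∧ (Pit j x₀).2 < r := by
    intro j hj
    have hGj := hGood j hj.le
    rcases Nat.eq_zero_or_pos j with rfl | hjpos
    · -- use the last step of the loop
      have hnh := hNoHoriz n (by omega) le_rfl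
      rw [hnFin, hfx₀] at hnh
      rw [hPit0 x₀]
      have hx1 : x₀.1 ∈ Icc (a 0) (b 0) := hx₀.1
      have hy : x₀.2 ∉ ({-r, r} : Set ℝ) := fun hy => hnh ⟨hx1, hy⟩
      simp only [mem_insert_iff, mem_singleton_iff] at hy
      push_neg at hy
      exact ⟨lt_of_le_of_ne hx₀.2.1 (Ne.symm hy.1), lt_of_le_of_ne hx₀.2.2 hy.2⟩
    · have hnh := hNoHoriz j hjpos hj.le
      have hy : (Pit j x₀).2 ∉ ({-r, r} : Set ℝ) := fun hy => hnh ⟨hGj.1, hy⟩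
      simp only [mem_insert_iff, mem_singleton_iff] at hy
      push_neg at hy
      exact ⟨lt_of_le_of_ne hGj.2.1 (Ne.symm hy.1), lt_of_le_of_ne hGj.2.2 hy.2⟩
  have hInterior : ∀ j : ℕ, j < n →
      Pit j x₀ ∈ interior (HSet (a (j : Fin n)) (b (j : Fin n)) r) := by
    intro j hj
    have hGj := hGood j hj.le
    have hE := hNotEdge j hj
    have hY := hNotHorizY j hj
    rw [HSet, interior_prod_eq, interior_Icc, interior_Icc]
    exact ⟨⟨lt_of_le_of_ne hGj.1.1 (Ne.symm hE.1), lt_of_le_of_ne hGj.1.2 hE.2⟩, hY⟩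
  refine ⟨x₀, ?_, ?_, ?_⟩
  · have := hInterior 0 hn0
    rwa [Nat.cast_zero, hPit0] at this
  · rw [← hIter n le_rfl]
    exact hfx₀
  · intro j
    have h1 := hInterior (j : ℕ) j.isLt
    rw [hIter (j : ℕ) j.isLt.le] at h1
    rwa [Fin.cast_val_eq_self] at h1
end
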